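/- arXiv:2004.01365 — 10 statements merged into one kernel-verified Lean document; each statement's English description precedes it below -/
import Mathlib

section
/- For every positive integer k there exists a (3K_1, 4-wheel)-free graph H (in particular, H is (P_5, 4-wheel)-free) such that ω(H) = 7k and χ(H) ≥ 10k; consequently χ(H) ≥ (10/7)·ω(H). -/
open SimpleGraph

/-- `G` contains no induced copy of `H`. -/
def InducedFree {W V : Type*} (H : SimpleGraph W) (G : SimpleGraph V) : Prop :=
  IsEmpty (H ↪g G)

/-- The `k`-wheel: a chordless cycle `C_k` plus an extra vertex adjacent to all of it. -/
def wheel (k : ℕ) : SimpleGraph (Fin k ⊕ Unit) :=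
  SimpleGraph.fromRel (fun x y =>
    (∃ a b, x = Sum.inl a ∧ y = Sum.inl b ∧ (SimpleGraph.cycleGraph k).Adj a b) ∨
    (x.isLeft ∧ y.isRight))

/-- A stable (independent) set: pairwise nonadjacent vertices. -/
def IsStableSet {V : Type*} (G : SimpleGraph V) (S : Set V) : Prop :=
  S.Pairwise (fun a b => ¬ G.Adj a b)

/-- A graph is nice if it has three disjoint stable sets whose removal
drops the clique number by at least 2. -/
def IsNice {V : Type*} (G : SimpleGraph V) : Prop :=
  ∃ S₁ S₂ S₃ : Set V, IsStableSet G S₁ ∧ IsStableSet G S₂ ∧ IsStableSet G S₃ ∧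
    Disjoint S₁ S₂ ∧ Disjoint S₁ S₃ ∧ Disjoint S₂ S₃ ∧
    (G.induce ((S₁ ∪ S₂ ∪ S₃)ᶜ)).cliqueNum ≤ G.cliqueNum - 2

/-- A quasi-line graph: every neighborhood is the union of two cliques. -/
def IsQuasiLine {V : Type*} (G : SimpleGraph V) : Prop :=
  ∀ v : V, ∃ K₁ K₂ : Set V, G.IsClique K₁ ∧ G.IsClique K₂ ∧
    G.neighborSet v = K₁ ∪ K₂

/-- A clique cutset: a clique whose removal increases the number of
connected components. -/
def HasCliqueCutset {V : Type*} (G : SimpleGraph V) : Prop :=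
  ∃ Q : Set V, G.IsClique Q ∧
    Nat.card G.ConnectedComponent < Nat.card (G.induce (Qᶜ)).ConnectedComponent

/-- An atom is a graph with no clique cutset. -/
def IsGraphAtom {V : Type*} (G : SimpleGraph V) : Prop := ¬ HasCliqueCutset G

/-- A perfect graph: every induced subgraph has chromatic number equal to
its clique number. -/
def IsPerfect {V : Type*} (G : SimpleGraph V) : Prop :=
  ∀ S : Set V, (G.induce S).chromaticNumber = ((G.induce S).cliqueNum : ℕ∞)

/-! ### Auxiliary constructions -/

/-- adjacency (on `ℕ`) of the circulant graph `C₂₀(1,3,8,10)`. -/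
def cadjB (a b : ℕ) : Bool :=
  let d := (a + 20 - b) % 20
  d == 1 || d == 3 || d == 8 || d == 10 || d == 12 || d == 17 || d == 19

lemma cadjB_symm : ∀ a < 20, ∀ b < 20, cadjB a b = cadjB b a := by decide

lemma cadjB_tri : ∀ a < 20, ∀ b < 20, ∀ c < 20,
    ¬(cadjB a b = true ∧ cadjB b c = true ∧ cadjB a c = true) := by decide

/-- Boolean check that `C₂₀(1,3,8,10)` has no (2K₂ ∪ K₁)-like configuration. -/
def chk : Bool := (List.range 20).all fun p0 => (List.range 20).all fun p2 =>
  !cadjB p0 p2 || ((List.range 20).all fun p1 => cadjB p0 p1 || cadjB p1 p2 ||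
    ((List.range 20).all fun p3 => !cadjB p1 p3 || cadjB p2 p3 || cadjB p3 p0 ||
      ((List.range 20).all fun q => cadjB q p0 || cadjB q p1 || cadjB q p2 || cadjB q p3)))

lemma chk_eq : chk = true := by decide

lemma chk_forall : ∀ p0 < 20, ∀ p2 < 20, cadjB p0 p2 = true →
    ∀ p1 < 20, cadjB p0 p1 = false → cadjB p1 p2 = false →
    ∀ p3 < 20, cadjB p1 p3 = true → cadjB p2 p3 = false → cadjB p3 p0 = false →
    ∀ q < 20, (cadjB q p0 = true ∨ cadjB q p1 = true ∨ cadjB q p2 = true ∨ cadjB q p3 = true) := by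
  have h := chk_eq
  simp only [chk, List.all_eq_true, List.mem_range, Bool.or_eq_true, Bool.not_eq_true'] at h
  intro p0 h0 p2 hp2 hA p1 hp1 h1 h2 p3 hp3 hB h3 h4 q hq
  rcases h p0 h0 p2 hp2 with h' | h'
  · rw [hA] at h'; cases h'
  rcases h' p1 hp1 with (h'' | h'') | h''
  · rw [h1] at h''; cases h''
  · rw [h2] at h''; cases h''
  rcases h'' p3 hp3 with ((h3' | h3') | h3') | h3'
  · rw [hB] at h3'; cases h3'
  · rw [h3] at h3'; cases h3'
  · rw [h4] at h3'; cases h3'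
  rcases h3' q hq with ((hq' | hq') | hq') | hq' <;> tauto

/-- Checker: is there an independent subset of `l` of size `k`? -/
def hiChk : ℕ → ℕ → List ℕ → Bool
  | _, 0, _ => true
  | 0, _ + 1, _ => false
  | _ + 1, _ + 1, [] => false
  | fuel + 1, k + 1, v :: l =>
      hiChk fuel (k + 1) l || hiChk fuel k (l.filter fun w => !cadjB v w)

lemma hiChk_false : hiChk 20 8 (List.range 20) = false := by decide

lemma hiChk_sound : ∀ n (l : List ℕ), l.length ≤ n → ∀ (k : ℕ) (S : Finset ℕ),
    (∀ v ∈ S, v ∈ l) → (∀ a ∈ S, ∀ b ∈ S, a ≠ b → cadjB a b = false) →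
    S.card = k → hiChk n k l = true := by
  intro n
  induction n with
  | zero =>
    intro l hl k S hSl hind hcard
    have hle : l = [] := List.eq_nil_of_length_eq_zero (Nat.le_zero.mp hl)
    subst hle
    have hS : S = ∅ := Finset.eq_empty_of_forall_notMem fun v hv => by simpa using hSl v hv
    subst hS
    simp only [Finset.card_empty] at hcard
    subst hcard
    rfl
  | succ n ih =>
    intro l hl k S hSl hind hcard
    match l, k with
    | l, 0 => cases l <;> simp [hiChk]
    | [], k + 1 =>
      exfalso
      have hS : S = ∅ := Finset.eq_empty_of_forall_notMem fun v hv => by simpa using hSl v hv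
      rw [hS] at hcard
      simp at hcard
    | v :: t, k + 1 =>
      have ht : t.length ≤ n := Nat.succ_le_succ_iff.mp hl
      by_cases hv : v ∈ S
      · have h1 : hiChk n k (t.filter fun w => !cadjB v w) = true := by
          apply ih _ (le_trans (List.length_filter_le _ _) ht) k (S.erase v)
          · intro w hw
            have hwS := Finset.mem_of_mem_erase hw
            have hwv : w ≠ v := Finset.ne_of_mem_erase hw
            have hwl := hSl w hwS
            rcases List.mem_cons.mp hwl with h | h
            · exact absurd h hwv
            · rw [List.mem_filter]
              refine ⟨h, ?_⟩
              have := hind v hv w hwS (Ne.symm hwv)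
              simp [this]
          · intro a ha b hb hab
            exact hind a (Finset.mem_of_mem_erase ha) b (Finset.mem_of_mem_erase hb) hab
          · rw [Finset.card_erase_of_mem hv, hcard]
            omega
        simp [hiChk, h1]
      · have h1 : hiChk n (k + 1) t = true := by
          apply ih t ht (k + 1) S _ hind hcard
          intro w hw
          rcases List.mem_cons.mp (hSl w hw) with h | h
          · exact absurd (h ▸ hw) hv
          · exact h
        simp [hiChk, h1]

lemma indep_card_le_seven (S : Finset ℕ) (hS : ∀ v ∈ S, v < 20)
    (hind : ∀ a ∈ S, ∀ b ∈ S, a ≠ b → cadjB a b = false) : S.card ≤ 7 := by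
  by_contra h
  push_neg at h
  obtain ⟨T, hTS, hT⟩ := Finset.exists_subset_card_eq (show 8 ≤ S.card from h)
  have : hiChk 20 8 (List.range 20) = true :=
    hiChk_sound 20 _ (by simp) 8 T (fun v hv => List.mem_range.mpr (hS v (hTS hv)))
      (fun a ha b hb hab => hind a (hTS ha) b (hTS hb) hab) hT
  rw [hiChk_false] at this
  cases this

/-- The graph `H_k`: the complement of `C₂₀(1,3,8,10)` with every vertex blown up
into a clique of size `k`. -/
def HG (k : ℕ) : SimpleGraph (Fin 20 × Fin k) where
  Adj x y := x ≠ y ∧ cadjB x.1.val y.1.val = false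
  symm := by
    constructor
    rintro x y ⟨h1, h2⟩
    refine ⟨Ne.symm h1, ?_⟩
    rw [cadjB_symm _ y.1.isLt _ x.1.isLt]
    exact h2
  loopless := ⟨fun x h => h.1 rfl⟩

lemma HG_adj_of_ne {k : ℕ} {x y : Fin 20 × Fin k} (hne : x ≠ y)
    (h : ¬(HG k).Adj x y) : cadjB x.1.val y.1.val = true := by
  by_contra hb
  exact h ⟨hne, (Bool.not_eq_true _).mp hb⟩

lemma free3K1 {k : ℕ} : InducedFree (⊥ : SimpleGraph (Fin 3)) (HG k) := by
  constructor
  intro f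
  have key : ∀ a b : Fin 3, a ≠ b → cadjB (f a).1.val (f b).1.val = true := by
    intro a b hab
    exact HG_adj_of_ne (fun h => hab (f.injective h))
      (fun h => by simpa using f.map_adj_iff.mp h)
  exact cadjB_tri _ (f 0).1.isLt _ (f 1).1.isLt _ (f 2).1.isLt
    ⟨key 0 1 (by decide), key 1 2 (by decide), key 0 2 (by decide)⟩

instance {k : ℕ} (x y : Fin k ⊕ Unit) : Decidable ((wheel k).Adj x y) :=
  decidable_of_iff _ (SimpleGraph.fromRel_adj _ x y).symm

instance (n : ℕ) : DecidableRel (SimpleGraph.pathGraph n).Adj :=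
  fun u v => decidable_of_iff _ (SimpleGraph.pathGraph_adj).symm

lemma freeW4 {k : ℕ} : InducedFree (wheel 4) (HG k) := by
  constructor
  intro f
  set P : Fin 4 → Fin 20 × Fin k := fun i => f (Sum.inl i) with hP
  set Q : Fin 20 × Fin k := f (Sum.inr ()) with hQ
  have hadj : ∀ x y : Fin 4 ⊕ Unit, (wheel 4).Adj x y →
      cadjB (f x).1.val (f y).1.val = false := by
    intro x y h
    exact (f.map_adj_iff.mpr h).2
  have hnadj : ∀ x y : Fin 4 ⊕ Unit, x ≠ y → ¬(wheel 4).Adj x y →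
      cadjB (f x).1.val (f y).1.val = true := by
    intro x y hne h
    exact HG_adj_of_ne (fun hh => hne (f.injective hh)) (fun hh => h (f.map_adj_iff.mp hh))
  have h02 : cadjB (P 0).1.val (P 2).1.val = true :=
    hnadj _ _ (by decide) (by decide)
  have h13 : cadjB (P 1).1.val (P 3).1.val = true :=
    hnadj _ _ (by decide) (by decide)
  have e01 : cadjB (P 0).1.val (P 1).1.val = false := hadj _ _ (by decide)
  have e12 : cadjB (P 1).1.val (P 2).1.val = false := hadj _ _ (by decide)
  have e23 : cadjB (P 2).1.val (P 3).1.val = false := hadj _ _ (by decide)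
  have e30 : cadjB (P 3).1.val (P 0).1.val = false := hadj _ _ (by decide)
  have eq0 : cadjB Q.1.val (P 0).1.val = false := by
    rw [cadjB_symm _ Q.1.isLt _ (P 0).1.isLt]; exact hadj _ _ (by decide)
  have eq1 : cadjB Q.1.val (P 1).1.val = false := by
    rw [cadjB_symm _ Q.1.isLt _ (P 1).1.isLt]; exact hadj _ _ (by decide)
  have eq2 : cadjB Q.1.val (P 2).1.val = false := by
    rw [cadjB_symm _ Q.1.isLt _ (P 2).1.isLt]; exact hadj _ _ (by decide)
  have eq3 : cadjB Q.1.val (P 3).1.val = false := by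
    rw [cadjB_symm _ Q.1.isLt _ (P 3).1.isLt]; exact hadj _ _ (by decide)
  have := chk_forall _ (P 0).1.isLt _ (P 2).1.isLt h02 _ (P 1).1.isLt e01 e12
    _ (P 3).1.isLt h13 e23 e30 _ Q.1.isLt
  rcases this with h | h | h | h
  · rw [eq0] at h; cases h
  · rw [eq1] at h; cases h
  · rw [eq2] at h; cases h
  · rw [eq3] at h; cases h

lemma freeP5 {k : ℕ} : InducedFree (SimpleGraph.pathGraph 5) (HG k) := by
  constructor
  intro f
  have hg : Function.Injective (![0, 2, 4] : Fin 3 → Fin 5) := by decide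
  refine (free3K1 (k := k)).false ?_
  refine ⟨⟨fun i => f ((![0, 2, 4] : Fin 3 → Fin 5) i), f.injective.comp hg⟩, ?_⟩
  intro a b
  simp only [Function.Embedding.coeFn_mk, f.map_adj_iff, SimpleGraph.bot_adj, iff_false]
  revert a b
  decide

/-- the independent set of size 7 in `C₂₀(1,3,8,10)`. -/
def Iset : Finset (Fin 20) := {0, 2, 4, 6, 11, 13, 15}

lemma Iset_nonadj : ∀ a ∈ Iset, ∀ b ∈ Iset, cadjB a.val b.val = false := by decide

lemma HG_isNClique {k : ℕ} : (HG k).IsNClique (7 * k) (Iset ×ˢ Finset.univ) := by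
  constructor
  · intro x hx y hy hxy
    rw [Finset.mem_coe, Finset.mem_product] at hx hy
    exact ⟨hxy, Iset_nonadj _ hx.1 _ hy.1⟩
  · rw [Finset.card_product]
    simp [Iset]

lemma HG_cliqueNum {k : ℕ} (hk : 0 < k) : (HG k).cliqueNum = 7 * k := by
  apply le_antisymm
  · obtain ⟨s, hs⟩ := (HG k).exists_isNClique_cliqueNum
    rw [← hs.2]
    have hfib : s.card ≤ k * (s.image fun x => x.1.val).card := by
      apply Finset.card_le_mul_card_image
      intro a _
      apply le_trans (Finset.card_le_card_of_injOn Prod.snd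
        (fun x _ => Finset.mem_univ x.2) ?_) (by simp)
      intro x hx y hy hxy
      simp only [Finset.coe_filter, Set.mem_setOf_eq] at hx hy
      have h1 : x.1 = y.1 := Fin.val_injective (hx.2.trans hy.2.symm)
      exact Prod.ext h1 hxy
    have h7 : (s.image fun x => x.1.val).card ≤ 7 := by
      apply indep_card_le_seven
      · intro v hv
        rw [Finset.mem_image] at hv
        obtain ⟨x, _, rfl⟩ := hv
        exact x.1.isLt
      · intro a ha b hb hab
        rw [Finset.mem_image] at ha hb
        obtain ⟨x, hx, rfl⟩ := ha
        obtain ⟨y, hy, rfl⟩ := hb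
        have hxy : x ≠ y := fun h => hab (by rw [h])
        exact (hs.1 hx hy hxy).2
    calc s.card ≤ k * (s.image fun x => x.1.val).card := hfib
      _ ≤ k * 7 := Nat.mul_le_mul_left k h7
      _ = 7 * k := Nat.mul_comm k 7
  · have := SimpleGraph.IsClique.card_le_cliqueNum (G := HG k)
      (t := Iset ×ˢ Finset.univ) (tc := HG_isNClique.1)
    rwa [HG_isNClique.2] at this

lemma HG_colorable_ge {k : ℕ} (m : ℕ) (hc : (HG k).Colorable m) : 10 * k ≤ m := by
  obtain ⟨c⟩ := hc
  have key : ∀ a b : Fin 20 × Fin k, a ≠ b → c a = c b → cadjB a.1.val b.1.val = true := by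
    intro a b hne hcc
    by_contra hb
    exact c.valid ⟨hne, (Bool.not_eq_true _).mp hb⟩ hcc
  have hcard : (Finset.univ : Finset (Fin 20 × Fin k)).card = 20 * k := by
    simp [Finset.card_univ]
  have hsum := Finset.card_eq_sum_card_fiberwise
    (f := c) (s := (Finset.univ : Finset (Fin 20 × Fin k)))
    (t := (Finset.univ : Finset (Fin m))) (fun x _ => Finset.mem_univ _)
  have hfib : ∀ i ∈ (Finset.univ : Finset (Fin m)),
      (Finset.univ.filter fun x => c x = i).card ≤ 2 := by
    intro i _
    by_contra h
    push_neg at h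
    obtain ⟨x, hx, y, hy, z, hz, hxy, hxz, hyz⟩ := Finset.two_lt_card.mp h
    rw [Finset.mem_filter] at hx hy hz
    exact cadjB_tri _ x.1.isLt _ y.1.isLt _ z.1.isLt
      ⟨key x y hxy (hx.2.trans hy.2.symm), key y z hyz (hy.2.trans hz.2.symm),
       key x z hxz (hx.2.trans hz.2.symm)⟩
  have hle : (Finset.univ : Finset (Fin 20 × Fin k)).card ≤ m * 2 := by
    rw [hsum]
    calc ∑ i ∈ (Finset.univ : Finset (Fin m)), (Finset.univ.filter fun x => c x = i).card
        ≤ (Finset.univ : Finset (Fin m)).card • 2 := Finset.sum_le_card_nsmul _ _ 2 hfib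
      _ = m * 2 := by simp [Finset.card_univ]
  rw [hcard] at hle
  omega

lemma HG_chrom_ge {k : ℕ} : ((10 * k : ℕ) : ℕ∞) ≤ (HG k).chromaticNumber := by
  rw [SimpleGraph.chromaticNumber]
  refine le_iInf₂ fun n hn => ?_
  exact_mod_cast HG_colorable_ge n hn

theorem stmt_1 (k : ℕ) (hk : 0 < k) :
    ∃ (V : Type) (_ : Fintype V) (H : SimpleGraph V),
      InducedFree (⊥ : SimpleGraph (Fin 3)) H ∧
      InducedFree (wheel 4) H ∧
      InducedFree (SimpleGraph.pathGraph 5) H ∧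
      H.cliqueNum = 7 * k ∧
      ((10 * k : ℕ) : ℕ∞) ≤ H.chromaticNumber ∧
      10 * (H.cliqueNum : ℕ∞) ≤ 7 * H.chromaticNumber := by
  refine ⟨Fin 20 × Fin k, inferInstance, HG k, free3K1, freeW4, freeP5,
    HG_cliqueNum hk, HG_chrom_ge, ?_⟩
  rw [HG_cliqueNum hk]
  calc (10 : ℕ∞) * ((7 * k : ℕ) : ℕ∞) = 7 * ((10 * k : ℕ) : ℕ∞) := by push_cast; ring
    _ ≤ 7 * (HG k).chromaticNumber := mul_le_mul_right HG_chrom_ge 7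
end

section
/- Let G be a P_5-free graph. Let A, B_1, B_2 be three disjoint, nonempty, pairwise anticomplete subsets of V(G). Let x and y be two nonadjacent vertices in V(G) ∖ (A ∪ B_1 ∪ B_2) such that x and y have a common neighbor in A, x has a neighbor in B_1, and y has a neighbor in B_2. Then x and y have a common neighbor in B_1 or in B_2. -/
open SimpleGraph

theorem stmt_7 {V : Type*} [Fintype V] (G : SimpleGraph V)
    (hP5 : InducedFree (SimpleGraph.pathGraph 5) G)
    (A B₁ B₂ : Set V)
    (hA : A.Nonempty) (hB₁ : B₁.Nonempty) (hB₂ : B₂.Nonempty)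
    (hd₁ : Disjoint A B₁) (hd₂ : Disjoint A B₂) (hd₃ : Disjoint B₁ B₂)
    (hanti₁ : ∀ a ∈ A, ∀ b ∈ B₁, ¬ G.Adj a b)
    (hanti₂ : ∀ a ∈ A, ∀ b ∈ B₂, ¬ G.Adj a b)
    (hanti₃ : ∀ a ∈ B₁, ∀ b ∈ B₂, ¬ G.Adj a b)
    (x y : V) (hx : x ∉ A ∪ B₁ ∪ B₂) (hy : y ∉ A ∪ B₁ ∪ B₂)
    (hxy : x ≠ y) (hnadj : ¬ G.Adj x y)
    (hcn : ∃ a ∈ A, G.Adj x a ∧ G.Adj y a)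
    (hxB : ∃ b ∈ B₁, G.Adj x b) (hyB : ∃ b ∈ B₂, G.Adj y b) :
    (∃ b ∈ B₁, G.Adj x b ∧ G.Adj y b) ∨ (∃ b ∈ B₂, G.Adj x b ∧ G.Adj y b) := by
  by_contra hcon
  push_neg at hcon
  obtain ⟨hc1, hc2⟩ := hcon
  obtain ⟨a, haA, hxa, hya⟩ := hcn
  obtain ⟨b₁, hb₁, hxb₁⟩ := hxB
  obtain ⟨b₂, hb₂, hyb₂⟩ := hyB
  have hyb₁ : ¬ G.Adj y b₁ := hc1 b₁ hb₁ hxb₁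
  have hxb₂ : ¬ G.Adj x b₂ := fun h => hc2 b₂ hb₂ h hyb₂
  have hxA : x ∉ A := fun h => hx (Or.inl (Or.inl h))
  have hxB1 : x ∉ B₁ := fun h => hx (Or.inl (Or.inr h))
  have hxB2 : x ∉ B₂ := fun h => hx (Or.inr h)
  have hyA : y ∉ A := fun h => hy (Or.inl (Or.inl h))
  have hyB1 : y ∉ B₁ := fun h => hy (Or.inl (Or.inr h))
  have hyB2 : y ∉ B₂ := fun h => hy (Or.inr h)
  have hab₁ : a ≠ b₁ := fun h => hd₁.ne_of_mem haA hb₁ h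
  have hab₂ : a ≠ b₂ := fun h => hd₂.ne_of_mem haA hb₂ h
  have hb₁b₂ : b₁ ≠ b₂ := fun h => hd₃.ne_of_mem hb₁ hb₂ h
  have hnab₁ : ¬ G.Adj a b₁ := hanti₁ a haA b₁ hb₁
  have hnab₂ : ¬ G.Adj a b₂ := hanti₂ a haA b₂ hb₂
  have hnb₁b₂ : ¬ G.Adj b₁ b₂ := hanti₃ b₁ hb₁ b₂ hb₂
  let f : Fin 5 → V := ![b₁, x, a, y, b₂]
  have hinj : Function.Injective f := by
    intro i j hij
    fin_cases i <;> fin_cases j <;> simp_all [f] <;>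
      first
      | exact hxB1 (by simp_all)
      | exact hab₁ (by simp_all)
      | exact hyB1 (by simp_all)
      | exact hb₁b₂ (by simp_all)
      | exact hxA (by simp_all)
      | exact hxy (by simp_all)
      | exact hxB2 (by simp_all)
      | exact hyA (by simp_all)
      | exact hab₂ (by simp_all)
      | exact hyB2 (by simp_all)
  have hmap : ∀ i j : Fin 5, G.Adj (f i) (f j) ↔ (SimpleGraph.pathGraph 5).Adj i j := by
    intro i j
    fin_cases i <;> fin_cases j <;>
      first
      | exact iff_of_false G.irrefl (by simp only [SimpleGraph.pathGraph_adj]; decide)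
      | exact iff_of_true hxb₁ (by simp only [SimpleGraph.pathGraph_adj]; decide)
      | exact iff_of_true hxb₁.symm (by simp only [SimpleGraph.pathGraph_adj]; decide)
      | exact iff_of_true hxa (by simp only [SimpleGraph.pathGraph_adj]; decide)
      | exact iff_of_true hxa.symm (by simp only [SimpleGraph.pathGraph_adj]; decide)
      | exact iff_of_true hya (by simp only [SimpleGraph.pathGraph_adj]; decide)
      | exact iff_of_true hya.symm (by simp only [SimpleGraph.pathGraph_adj]; decide)
      | exact iff_of_true hyb₂ (by simp only [SimpleGraph.pathGraph_adj]; decide)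
      | exact iff_of_true hyb₂.symm (by simp only [SimpleGraph.pathGraph_adj]; decide)
      | exact iff_of_false hnab₁ (by simp only [SimpleGraph.pathGraph_adj]; decide)
      | exact iff_of_false (fun h => hnab₁ h.symm) (by simp only [SimpleGraph.pathGraph_adj]; decide)
      | exact iff_of_false hyb₁ (by simp only [SimpleGraph.pathGraph_adj]; decide)
      | exact iff_of_false (fun h => hyb₁ h.symm) (by simp only [SimpleGraph.pathGraph_adj]; decide)
      | exact iff_of_false hnb₁b₂ (by simp only [SimpleGraph.pathGraph_adj]; decide)
      | exact iff_of_false (fun h => hnb₁b₂ h.symm) (by simp only [SimpleGraph.pathGraph_adj]; decide)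
      | exact iff_of_false hnadj (by simp only [SimpleGraph.pathGraph_adj]; decide)
      | exact iff_of_false (fun h => hnadj h.symm) (by simp only [SimpleGraph.pathGraph_adj]; decide)
      | exact iff_of_false hxb₂ (by simp only [SimpleGraph.pathGraph_adj]; decide)
      | exact iff_of_false (fun h => hxb₂ h.symm) (by simp only [SimpleGraph.pathGraph_adj]; decide)
      | exact iff_of_false hnab₂ (by simp only [SimpleGraph.pathGraph_adj]; decide)
      | exact iff_of_false (fun h => hnab₂ h.symm) (by simp only [SimpleGraph.pathGraph_adj]; decide)
  exact hP5.false ⟨⟨f, hinj⟩, fun {i j} => hmap i j⟩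
end

section
/- Let G be a graph and let D_1, D_2, D_3 be three disjoint nonempty subsets of V(G), each inducing a P_3-free subgraph (so for each i, G[D_i] is a disjoint union of cliques; its maximal cliques are called D_i-cliques). Suppose that for all i ≠ j, every D_i-clique is either complete or anticomplete to every D_j-clique. For i = 1, 2, let R_i ⊆ D_i be a stable set containing exactly one vertex from each D_i-clique. If M is a maximal clique of G[D_1 ∪ D_2 ∪ D_3] containing at least one vertex of D_1 and at least one vertex of D_2, then (R_1 ∪ R_2) ∩ M contains at least two vertices. -/
open SimpleGraph

/-- `K` is a maximal clique of the subgraph of `G` induced by `D`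
(equivalently, a maximal clique of `G` among those contained in `D`). -/
def IsMaxCliqueWithin {V : Type*} (G : SimpleGraph V) (D K : Set V) : Prop :=
  K ⊆ D ∧ G.IsClique K ∧ ∀ K' : Set V, K ⊆ K' → K' ⊆ D → G.IsClique K' → K' = K

lemma exists_maxCliqueWithin {V : Type*} [Fintype V] (G : SimpleGraph V)
    (D C : Set V) (hCD : C ⊆ D) (hC : G.IsClique C) :
    ∃ K, C ⊆ K ∧ IsMaxCliqueWithin G D K := by
  obtain ⟨K, hK, hmax⟩ := Set.Finite.exists_maximalFor id
    {K | C ⊆ K ∧ K ⊆ D ∧ G.IsClique K} (Set.toFinite _) ⟨C, subset_rfl, hCD, hC⟩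
  exact ⟨K, hK.1, hK.2.1, hK.2.2,
    fun K' hKK' hK'D hK' => le_antisymm (hmax ⟨hK.1.trans hKK', hK'D, hK'⟩ hKK') hKK'⟩

lemma key_mem {V : Type*} [Fintype V] (G : SimpleGraph V) (D : Fin 3 → Set V)
    (hcompanti : ∀ i j : Fin 3, i ≠ j → ∀ K K' : Set V,
      IsMaxCliqueWithin G (D i) K → IsMaxCliqueWithin G (D j) K' →
      (∀ a ∈ K, ∀ b ∈ K', G.Adj a b) ∨ (∀ a ∈ K, ∀ b ∈ K', ¬ G.Adj a b))
    (i : Fin 3) (R : Set V) (hRsub : R ⊆ D i)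
    (hRone : ∀ K, IsMaxCliqueWithin G (D i) K → ∃! v, v ∈ R ∩ K)
    (M : Set V) (hM : IsMaxCliqueWithin G (D 0 ∪ D 1 ∪ D 2) M)
    (hMi : (M ∩ D i).Nonempty) : ∃ r, r ∈ R ∧ r ∈ M := by
  obtain ⟨K, hMK, hKmax⟩ := exists_maxCliqueWithin G (D i) (M ∩ D i)
    Set.inter_subset_right (hM.2.1.subset Set.inter_subset_left)
  obtain ⟨r, ⟨hrR, hrK⟩, -⟩ := hRone K hKmax
  suffices hr : r ∈ M from ⟨r, hrR, hr⟩
  have claim : ∀ y ∈ M, r ≠ y → G.Adj r y := by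
    intro y hyM hry
    by_cases hyD : y ∈ D i
    · exact hKmax.2.1 hrK (hMK ⟨hyM, hyD⟩) hry
    · obtain ⟨v, hvM, hvDi⟩ := hMi
      have hvy : v ≠ y := fun h => hyD (h ▸ hvDi)
      have hadj : G.Adj v y := hM.2.1 hvM hyM hvy
      have hj : ∃ j, y ∈ D j := by
        rcases hM.1 hyM with (h | h) | h
        exacts [⟨0, h⟩, ⟨1, h⟩, ⟨2, h⟩]
      obtain ⟨j, hyj⟩ := hj
      have hji : i ≠ j := fun h => hyD (h ▸ hyj)
      obtain ⟨K', hyK', hK'max⟩ := exists_maxCliqueWithin G (D j) {y}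
        (Set.singleton_subset_iff.mpr hyj) (Set.pairwise_singleton y G.Adj)
      rcases hcompanti i j hji K K' hKmax hK'max with hcomp | hanti
      · exact hcomp r hrK y (hyK' rfl)
      · exact absurd hadj (hanti v (hMK ⟨hvM, hvDi⟩) y (hyK' rfl))
  have hclique : G.IsClique (M ∪ {r}) := by
    intro x hx y hy hxy
    rcases hx with hx | hx <;> rcases hy with hy | hy
    · exact hM.2.1 hx hy hxy
    · have hy' : y = r := hy
      subst hy'
      exact (claim x hx (fun h => hxy h.symm)).symm
    · have hx' : x = r := hx
      subst hx'
      exact claim y hy hxy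
    · exact absurd (hx.trans hy.symm) hxy
  have hDi : D i ⊆ D 0 ∪ D 1 ∪ D 2 := by
    intro x hx
    fin_cases i
    exacts [Or.inl (Or.inl hx), Or.inl (Or.inr hx), Or.inr hx]
  have heq := hM.2.2 (M ∪ {r}) Set.subset_union_left
    (Set.union_subset hM.1 (Set.singleton_subset_iff.mpr (hDi (hKmax.1 hrK)))) hclique
  rw [← heq]; exact Or.inr rfl

theorem stmt_9 {V : Type*} [Fintype V] (G : SimpleGraph V)
    (D : Fin 3 → Set V)
    (hne : ∀ i, (D i).Nonempty)
    (hdisj : ∀ i j, i ≠ j → Disjoint (D i) (D j))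
    (hP3 : ∀ i, InducedFree (SimpleGraph.pathGraph 3) (G.induce (D i)))
    (hcompanti : ∀ i j : Fin 3, i ≠ j → ∀ K K' : Set V,
      IsMaxCliqueWithin G (D i) K → IsMaxCliqueWithin G (D j) K' →
      (∀ a ∈ K, ∀ b ∈ K', G.Adj a b) ∨ (∀ a ∈ K, ∀ b ∈ K', ¬ G.Adj a b))
    (R₁ R₂ : Set V)
    (hR₁sub : R₁ ⊆ D 0) (hR₁st : IsStableSet G R₁)
    (hR₁one : ∀ K, IsMaxCliqueWithin G (D 0) K → ∃! v, v ∈ R₁ ∩ K)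
    (hR₂sub : R₂ ⊆ D 1) (hR₂st : IsStableSet G R₂)
    (hR₂one : ∀ K, IsMaxCliqueWithin G (D 1) K → ∃! v, v ∈ R₂ ∩ K)
    (M : Set V)
    (hM : IsMaxCliqueWithin G (D 0 ∪ D 1 ∪ D 2) M)
    (hM₁ : (M ∩ D 0).Nonempty) (hM₂ : (M ∩ D 1).Nonempty) :
    ∃ a ∈ (R₁ ∪ R₂) ∩ M, ∃ b ∈ (R₁ ∪ R₂) ∩ M, a ≠ b := by
  obtain ⟨r₁, hr₁R, hr₁M⟩ := key_mem G D hcompanti 0 R₁ hR₁sub hR₁one M hM hM₁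
  obtain ⟨r₂, hr₂R, hr₂M⟩ := key_mem G D hcompanti 1 R₂ hR₂sub hR₂one M hM hM₂
  refine ⟨r₁, ⟨Or.inl hr₁R, hr₁M⟩, r₂, ⟨Or.inr hr₂R, hr₂M⟩, ?_⟩
  exact fun h => Set.disjoint_left.mp (hdisj 0 1 (by decide))
    (hR₁sub hr₁R) (h ▸ hR₂sub hr₂R)
end

section
/- In the C_5-setup, V(G) = A ∪ X ∪ Y ∪ Z ∪ T. -/
open SimpleGraph

/-- The union `A = A₁ ∪ ⋯ ∪ A₅` of the `C₅`-setup. -/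
def setA {V : Type*} (A : Fin 5 → Set V) : Set V := ⋃ i, A i

/-- `T`: vertices outside `A` with no neighbor in `A`. -/
def setT {V : Type*} (G : SimpleGraph V) (A : Fin 5 → Set V) : Set V :=
  {x | x ∉ setA A ∧ ∀ a ∈ setA A, ¬ G.Adj x a}

/-- `Z`: vertices outside `A` with a neighbor in every `A i`. -/
def setZ {V : Type*} (G : SimpleGraph V) (A : Fin 5 → Set V) : Set V :=
  {x | x ∉ setA A ∧ ∀ i : Fin 5, ∃ a ∈ A i, G.Adj x a}

/-- `X i`: vertices outside `A` with a neighbor in each of `A i`, `A (i+2)`,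
`A (i-2)`, and anticomplete to `A (i+1) ∪ A (i-1)`. -/
def setX {V : Type*} (G : SimpleGraph V) (A : Fin 5 → Set V) (i : Fin 5) : Set V :=
  {x | x ∉ setA A ∧ (∃ a ∈ A i, G.Adj x a) ∧ (∃ a ∈ A (i + 2), G.Adj x a) ∧
    (∃ a ∈ A (i - 2), G.Adj x a) ∧ ∀ a ∈ A (i + 1) ∪ A (i - 1), ¬ G.Adj x a}

/-- `Y i`: vertices outside `A` with a neighbor in each `A j`, `j ≠ i`,
and anticomplete to `A i`. -/
def setY {V : Type*} (G : SimpleGraph V) (A : Fin 5 → Set V) (i : Fin 5) : Set V :=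
  {x | x ∉ setA A ∧ (∀ j : Fin 5, j ≠ i → ∃ a ∈ A j, G.Adj x a) ∧
    ∀ a ∈ A i, ¬ G.Adj x a}

lemma no_p5' {V : Type*} (G : SimpleGraph V)
    (hP5 : InducedFree (SimpleGraph.pathGraph 5) G)
    {a b c d e : V}
    (hab : G.Adj a b) (hbc : G.Adj b c) (hcd : G.Adj c d) (hde : G.Adj d e)
    (hac : ¬ G.Adj a c) (had : ¬ G.Adj a d) (hae : ¬ G.Adj a e)
    (hbd : ¬ G.Adj b d) (hbe : ¬ G.Adj b e) (hce : ¬ G.Adj c e)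
    (nac : a ≠ c) (nad : a ≠ d) (nae : a ≠ e)
    (nbd : b ≠ d) (nbe : b ≠ e) (nce : c ≠ e) : False := by
  have nab := hab.ne; have nbc := hbc.ne; have ncd := hcd.ne; have nde := hde.ne
  have hinj : Function.Injective ![a,b,c,d,e] := by
    intro x y hxy
    fin_cases x <;> fin_cases y <;> simp_all
  refine IsEmpty.false (self := hP5) ⟨⟨![a,b,c,d,e], hinj⟩, ?_⟩
  intro x y
  have hba := hab.symm; have hcb := hbc.symm; have hdc := hcd.symm; have hed := hde.symm
  have hca : ¬ G.Adj c a := fun h => hac h.symm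
  have hda : ¬ G.Adj d a := fun h => had h.symm
  have hea : ¬ G.Adj e a := fun h => hae h.symm
  have hdb : ¬ G.Adj d b := fun h => hbd h.symm
  have heb : ¬ G.Adj e b := fun h => hbe h.symm
  have hec : ¬ G.Adj e c := fun h => hce h.symm
  fin_cases x <;> fin_cases y <;>
    simp_all [SimpleGraph.pathGraph_adj] <;> decide

theorem stmt_10 {V : Type*} [Fintype V] (G : SimpleGraph V) (A : Fin 5 → Set V)
    (hconn : G.Connected)
    (hP5 : InducedFree (SimpleGraph.pathGraph 5) G)
    (hW4 : InducedFree (wheel 4) G)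
    (hatom : IsGraphAtom G)
    (hAne : ∀ i : Fin 5, (A i).Nonempty)
    (hAdisj : ∀ i j : Fin 5, i ≠ j → Disjoint (A i) (A j))
    (hAcomp : ∀ i : Fin 5, ∀ a ∈ A i, ∀ b ∈ A (i + 1), G.Adj a b)
    (hAanti : ∀ i : Fin 5, ∀ a ∈ A i, ∀ b ∈ A (i + 2), ¬ G.Adj a b)
    (hAmax : ∀ v : V, v ∉ setA A → ¬ ∃ i : Fin 5,
      (∀ a ∈ A (i - 1) ∪ A (i + 1), G.Adj v a) ∧
      (∀ a ∈ A (i - 2) ∪ A (i + 2), ¬ G.Adj v a)) :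
    ∀ v : V, v ∈ setA A ∪ (⋃ i, setX G A i) ∪ (⋃ i, setY G A i) ∪
      setZ G A ∪ setT G A := by
  classical
  intro v
  simp only [Set.mem_union]
  by_cases hvA : v ∈ setA A
  · exact Or.inl (Or.inl (Or.inl (Or.inl hvA)))
  have hmemA : ∀ i : Fin 5, ∀ a ∈ A i, a ∈ setA A := fun i a ha => Set.mem_iUnion.2 ⟨i, ha⟩
  -- distinctness helpers
  have hneAA : ∀ i k : Fin 5, i ≠ k → ∀ a ∈ A i, ∀ b ∈ A k, a ≠ b :=
    fun i k hik a ha b hb => (hAdisj i k hik).ne_of_mem ha hb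
  have hvne : ∀ i : Fin 5, ∀ a ∈ A i, v ≠ a := fun i a ha h => hvA (h ▸ hmemA i a ha)
  -- adjacency helpers (both directions)
  have adj : ∀ i k : Fin 5, (i + 1 = k ∨ k + 1 = i) → ∀ x ∈ A i, ∀ y ∈ A k, G.Adj x y := by
    intro i k hk x hx y hy
    rcases hk with hk | hk
    · subst hk; exact hAcomp i x hx y hy
    · subst hk; exact (hAcomp k y hy x hx).symm
  have nadj : ∀ i k : Fin 5, (i + 2 = k ∨ k + 2 = i) → ∀ x ∈ A i, ∀ y ∈ A k, ¬ G.Adj x y := by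
    intro i k hk x hx y hy h
    rcases hk with hk | hk
    · subst hk; exact hAanti i x hx y hy h
    · subst hk; exact hAanti k y hy x hx h.symm
  -- Lemma B : if v has a neighbor in A j and none in A (j+2), A (j+3), contradiction
  have lemB : ∀ j : Fin 5, (∃ a ∈ A j, G.Adj v a) →
      ¬ (∃ a ∈ A (j+2), G.Adj v a) → ¬ (∃ a ∈ A (j+3), G.Adj v a) → False := by
    intro j hj hj2 hj3
    obtain ⟨a, ha, hva⟩ := hj
    have hQ : ∀ x ∈ A (j-2) ∪ A (j+2), ¬ G.Adj v x := by
      rintro x (hx | hx) h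
      · exact hj3 ⟨x, by rw [show j - 2 = j + 3 by omega] at hx; exact hx, h⟩
      · exact hj2 ⟨x, hx, h⟩
    have hnotP : ¬ ∀ x ∈ A (j-1) ∪ A (j+1), G.Adj v x := fun hP => hAmax v hvA ⟨j, hP, hQ⟩
    push_neg at hnotP
    obtain ⟨w, hw, hvw⟩ := hnotP
    obtain ⟨d, hd⟩ := hAne (j+2)
    obtain ⟨e, he⟩ := hAne (j+3)
    have hv2 : ∀ x ∈ A (j+2), ¬ G.Adj v x := fun x hx h => hj2 ⟨x, hx, h⟩
    have hv3 : ∀ x ∈ A (j+3), ¬ G.Adj v x := fun x hx h => hj3 ⟨x, hx, h⟩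
    rcases hw with hw | hw
    · -- w ∈ A (j-1) = A (j+4); induced P5 : d - e - w - a - v
      rw [show j - 1 = j + 4 by omega] at hw
      exact no_p5' G hP5
        (adj (j+2) (j+3) (Or.inl (by omega)) d hd e he)
        (adj (j+3) (j+4) (Or.inl (by omega)) e he w hw)
        (adj (j+4) j (Or.inl (by omega)) w hw a ha)
        hva.symm
        (nadj (j+2) (j+4) (Or.inl (by omega)) d hd w hw)
        (nadj (j+2) j (Or.inr (by omega)) d hd a ha)
        (fun h => hv2 d hd h.symm)
        (nadj (j+3) j (Or.inl (by omega)) e he a ha)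
        (fun h => hv3 e he h.symm)
        (fun h => hvw h.symm)
        (hneAA (j+2) (j+4) (by intro hxx; omega) d hd w hw)
        (hneAA (j+2) j (by intro hxx; omega) d hd a ha)
        (fun h => hvne (j+2) d hd h.symm)
        (hneAA (j+3) j (by intro hxx; omega) e he a ha)
        (fun h => hvne (j+3) e he h.symm)
        (fun h => hvne (j+4) w hw h.symm)
    · -- w ∈ A (j+1); induced P5 : e - d - w - a - v
      exact no_p5' G hP5
        (adj (j+3) (j+2) (Or.inr (by omega)) e he d hd)
        (adj (j+2) (j+1) (Or.inr (by omega)) d hd w hw)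
        (adj (j+1) j (Or.inr (by omega)) w hw a ha)
        hva.symm
        (nadj (j+3) (j+1) (Or.inr (by omega)) e he w hw)
        (nadj (j+3) j (Or.inl (by omega)) e he a ha)
        (fun h => hv3 e he h.symm)
        (nadj (j+2) j (Or.inr (by omega)) d hd a ha)
        (fun h => hv2 d hd h.symm)
        (fun h => hvw h.symm)
        (hneAA (j+3) (j+1) (by intro hxx; omega) e he w hw)
        (hneAA (j+3) j (by intro hxx; omega) e he a ha)
        (fun h => hvne (j+3) e he h.symm)
        (hneAA (j+2) j (by intro hxx; omega) d hd a ha)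
        (fun h => hvne (j+2) d hd h.symm)
        (fun h => hvne (j+1) w hw h.symm)
  -- Lemma C : pattern {i, i+2}
  have lemC : ∀ i : Fin 5, (∃ a ∈ A i, G.Adj v a) → (∃ a ∈ A (i+2), G.Adj v a) →
      ¬ (∃ a ∈ A (i+1), G.Adj v a) → ¬ (∃ a ∈ A (i+3), G.Adj v a) →
      ¬ (∃ a ∈ A (i+4), G.Adj v a) → False := by
    intro i hi hi2 hn1 hn3 hn4
    obtain ⟨a, ha, hva⟩ := hi
    obtain ⟨c, hc, hvc⟩ := hi2
    have hv1 : ∀ x ∈ A (i+1), ¬ G.Adj v x := fun x hx h => hn1 ⟨x, hx, h⟩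
    have hv3 : ∀ x ∈ A (i+3), ¬ G.Adj v x := fun x hx h => hn3 ⟨x, hx, h⟩
    have hv4 : ∀ x ∈ A (i+4), ¬ G.Adj v x := fun x hx h => hn4 ⟨x, hx, h⟩
    have hQ : ∀ x ∈ A ((i+1)-2) ∪ A ((i+1)+2), ¬ G.Adj v x := by
      rintro x (hx | hx) h
      · exact hv4 x (by rw [show (i+1) - 2 = i + 4 by omega] at hx; exact hx) h
      · exact hv3 x (by rw [show (i+1) + 2 = i + 3 by omega] at hx; exact hx) h
    have hnotP : ¬ ∀ x ∈ A ((i+1)-1) ∪ A ((i+1)+1), G.Adj v x :=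
      fun hP => hAmax v hvA ⟨i+1, hP, hQ⟩
    push_neg at hnotP
    obtain ⟨w, hw, hvw⟩ := hnotP
    obtain ⟨b, hb⟩ := hAne (i+1)
    rcases hw with hw | hw
    · -- w ∈ A i (non-neighbor) : induced P5 : v - c - b - w - e, e ∈ A (i+4)
      rw [show (i+1) - 1 = i by omega] at hw
      obtain ⟨e, he⟩ := hAne (i+4)
      exact no_p5' G hP5
        hvc
        (adj (i+2) (i+1) (Or.inr (by omega)) c hc b hb)
        (adj (i+1) i (Or.inr (by omega)) b hb w hw)
        (adj i (i+4) (Or.inr (by omega)) w hw e he)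
        (fun h => hv1 b hb h)
        hvw
        (fun h => hv4 e he h)
        (nadj (i+2) i (Or.inr (by omega)) c hc w hw)
        (nadj (i+2) (i+4) (Or.inl (by omega)) c hc e he)
        (nadj (i+1) (i+4) (Or.inr (by omega)) b hb e he)
        (hvne (i+1) b hb)
        (hvne i w hw)
        (hvne (i+4) e he)
        (hneAA (i+2) i (by intro hxx; omega) c hc w hw)
        (hneAA (i+2) (i+4) (by intro hxx; omega) c hc e he)
        (hneAA (i+1) (i+4) (by intro hxx; omega) b hb e he)
    · -- w ∈ A (i+2) : induced P5 : v - a - b - w - e, e ∈ A (i+3)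
      rw [show (i+1) + 1 = i + 2 by omega] at hw
      obtain ⟨e, he⟩ := hAne (i+3)
      exact no_p5' G hP5
        hva
        (adj i (i+1) (Or.inl (by omega)) a ha b hb)
        (adj (i+1) (i+2) (Or.inl (by omega)) b hb w hw)
        (adj (i+2) (i+3) (Or.inl (by omega)) w hw e he)
        (fun h => hv1 b hb h)
        hvw
        (fun h => hv3 e he h)
        (nadj i (i+2) (Or.inl (by omega)) a ha w hw)
        (nadj i (i+3) (Or.inr (by omega)) a ha e he)
        (nadj (i+1) (i+3) (Or.inl (by omega)) b hb e he)
        (hvne (i+1) b hb)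
        (hvne (i+2) w hw)
        (hvne (i+3) e he)
        (hneAA i (i+2) (by intro hxx; omega) a ha w hw)
        (hneAA i (i+3) (by intro hxx; omega) a ha e he)
        (hneAA (i+1) (i+3) (by intro hxx; omega) b hb e he)
  have memX : ∀ i : Fin 5, (∃ a ∈ A i, G.Adj v a) → (∃ a ∈ A (i+2), G.Adj v a) →
      (∃ a ∈ A (i+3), G.Adj v a) → ¬(∃ a ∈ A (i+1), G.Adj v a) →
      ¬(∃ a ∈ A (i+4), G.Adj v a) → v ∈ ⋃ k, setX G A k := by
    intro i hi hi2 hi3 hn1 hn4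
    refine Set.mem_iUnion.2 ⟨i, hvA, hi, hi2, ?_, ?_⟩
    · rw [show i - 2 = i + 3 by omega]; exact hi3
    · rintro a (ha | ha) h
      · exact hn1 ⟨a, ha, h⟩
      · exact hn4 ⟨a, by rw [show i - 1 = i + 4 by omega] at ha; exact ha, h⟩
  have hfour : ∀ i j : Fin 5, j ≠ i → (j = i+1 ∨ j = i+2 ∨ j = i+3 ∨ j = i+4) := by decide
  have memY : ∀ i : Fin 5, (∃ a ∈ A (i+1), G.Adj v a) → (∃ a ∈ A (i+2), G.Adj v a) →
      (∃ a ∈ A (i+3), G.Adj v a) → (∃ a ∈ A (i+4), G.Adj v a) →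
      ¬(∃ a ∈ A i, G.Adj v a) → v ∈ ⋃ k, setY G A k := by
    intro i h1' h2' h3' h4' h0'
    refine Set.mem_iUnion.2 ⟨i, hvA, ?_, fun a ha h => h0' ⟨a, ha, h⟩⟩
    intro j hj
    rcases hfour i j hj with rfl | rfl | rfl | rfl
    exacts [h1', h2', h3', h4']
  have memZ : (∀ i : Fin 5, ∃ a ∈ A i, G.Adj v a) → v ∈ setZ G A := fun h => ⟨hvA, h⟩
  have memT : (∀ i : Fin 5, ¬ ∃ a ∈ A i, G.Adj v a) → v ∈ setT G A := by
    intro h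
    refine ⟨hvA, fun a ha hadj => ?_⟩
    obtain ⟨i, hi⟩ := Set.mem_iUnion.1 ha
    exact h i ⟨a, hi, hadj⟩
  by_cases h0 : ∃ a ∈ A 0, G.Adj v a <;>
  by_cases h1 : ∃ a ∈ A 1, G.Adj v a <;>
  by_cases h2 : ∃ a ∈ A 2, G.Adj v a <;>
  by_cases h3 : ∃ a ∈ A 3, G.Adj v a <;>
  by_cases h4 : ∃ a ∈ A 4, G.Adj v a
  · refine Or.inl (Or.inr (memZ ?_)); intro i; fin_cases i; exacts [h0, h1, h2, h3, h4]
  · exact Or.inl (Or.inl (Or.inr (memY 4 h0 h1 h2 h3 h4)))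
  · exact Or.inl (Or.inl (Or.inr (memY 3 h4 h0 h1 h2 h3)))
  · exact (lemB 1 h1 h3 h4).elim
  · exact Or.inl (Or.inl (Or.inr (memY 2 h3 h4 h0 h1 h2)))
  · exact Or.inl (Or.inl (Or.inl (Or.inr (memX 3 h3 h0 h1 h4 h2))))
  · exact (lemB 0 h0 h2 h3).elim
  · exact (lemB 0 h0 h2 h3).elim
  · exact Or.inl (Or.inl (Or.inr (memY 1 h2 h3 h4 h0 h1)))
  · exact Or.inl (Or.inl (Or.inl (Or.inr (memX 0 h0 h2 h3 h1 h4))))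
  · exact Or.inl (Or.inl (Or.inl (Or.inr (memX 2 h2 h4 h0 h3 h1))))
  · exact (lemC 0 h0 h2 h1 h3 h4).elim
  · exact (lemB 4 h4 h1 h2).elim
  · exact (lemC 3 h3 h0 h4 h1 h2).elim
  · exact (lemB 4 h4 h1 h2).elim
  · exact (lemB 0 h0 h2 h3).elim
  · exact Or.inl (Or.inl (Or.inr (memY 0 h1 h2 h3 h4 h0)))
  · exact (lemB 2 h2 h4 h0).elim
  · exact Or.inl (Or.inl (Or.inl (Or.inr (memX 4 h4 h1 h2 h0 h3))))
  · exact (lemB 1 h1 h3 h4).elim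
  · exact Or.inl (Or.inl (Or.inl (Or.inr (memX 1 h1 h3 h4 h2 h0))))
  · exact (lemC 1 h1 h3 h2 h4 h0).elim
  · exact (lemC 4 h4 h1 h0 h2 h3).elim
  · exact (lemB 1 h1 h3 h4).elim
  · exact (lemB 3 h3 h0 h1).elim
  · exact (lemB 2 h2 h4 h0).elim
  · exact (lemC 2 h2 h4 h3 h0 h1).elim
  · exact (lemB 2 h2 h4 h0).elim
  · exact (lemB 3 h3 h0 h1).elim
  · exact (lemB 3 h3 h0 h1).elim
  · exact (lemB 4 h4 h1 h2).elim
  · refine Or.inr (memT ?_); intro i; fin_cases i; exacts [h0, h1, h2, h3, h4]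
end

section
/- In the C_5-setup, for each i the set X_i is complete to A_i. -/
open SimpleGraph

set_option maxHeartbeats 1000000 in
theorem stmt_12 {V : Type*} [Fintype V] (G : SimpleGraph V) (A : Fin 5 → Set V)
    (hconn : G.Connected)
    (hP5 : InducedFree (SimpleGraph.pathGraph 5) G)
    (hW4 : InducedFree (wheel 4) G)
    (hatom : IsGraphAtom G)
    (hAne : ∀ i : Fin 5, (A i).Nonempty)
    (hAdisj : ∀ i j : Fin 5, i ≠ j → Disjoint (A i) (A j))
    (hAcomp : ∀ i : Fin 5, ∀ a ∈ A i, ∀ b ∈ A (i + 1), G.Adj a b)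
    (hAanti : ∀ i : Fin 5, ∀ a ∈ A i, ∀ b ∈ A (i + 2), ¬ G.Adj a b)
    (hAmax : ∀ v : V, v ∉ setA A → ¬ ∃ i : Fin 5,
      (∀ a ∈ A (i - 1) ∪ A (i + 1), G.Adj v a) ∧
      (∀ a ∈ A (i - 2) ∪ A (i + 2), ¬ G.Adj v a)) :
    ∀ i : Fin 5, ∀ x ∈ setX G A i, ∀ a ∈ A i, G.Adj x a := by
  intro i x hx a ha
  by_contra hxa
  obtain ⟨hxA, ⟨a', ha', hxa'⟩, ⟨b, hb, hxb⟩, ⟨c, hc, hxc⟩, hanti⟩ := hx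
  obtain ⟨q, hq⟩ := hAne (i - 1)
  obtain ⟨p, hp⟩ := hAne (i + 1)
  -- adjacency facts
  have hqa : G.Adj q a := hAcomp (i - 1) q hq a
    (by rwa [show i - 1 + 1 = i by apply Fin.ext; simp [Fin.sub_def, Fin.add_def]; try omega])
  have hap : G.Adj a p := hAcomp i a ha p hp
  have hpb : G.Adj p b := hAcomp (i + 1) p hp b
    (by rwa [show i + 1 + 1 = i + 2 by apply Fin.ext; simp [Fin.add_def]; try omega])
  have hbx : G.Adj b x := hxb.symm
  -- non-adjacency facts
  have hqp : ¬ G.Adj q p := hAanti (i - 1) q hq p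
    (by rwa [show i - 1 + 2 = i + 1 by apply Fin.ext; simp [Fin.sub_def, Fin.add_def]; try omega])
  have hbq : ¬ G.Adj b q := hAanti (i + 2) b hb q
    (by rwa [show i + 2 + 2 = i - 1 by apply Fin.ext; simp [Fin.sub_def, Fin.add_def]; try omega])
  have hqx : ¬ G.Adj q x := fun h => hanti q (Or.inr hq) h.symm
  have hab : ¬ G.Adj a b := hAanti i a ha b hb
  have hax : ¬ G.Adj a x := fun h => hxa h.symm
  have hpx : ¬ G.Adj p x := fun h => hanti p (Or.inl hp) h.symm
  -- symmetric versions
  have haq : G.Adj a q := hqa.symm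
  have hpa : G.Adj p a := hap.symm
  have hbp : G.Adj b p := hpb.symm
  have hxb' : G.Adj x b := hbx.symm
  have hpq : ¬ G.Adj p q := fun h => hqp h.symm
  have hqb : ¬ G.Adj q b := fun h => hbq h.symm
  have hxq : ¬ G.Adj x q := fun h => hqx h.symm
  have hba : ¬ G.Adj b a := fun h => hab h.symm
  have hxa2 : ¬ G.Adj x a := hxa
  have hxp : ¬ G.Adj x p := fun h => hpx h.symm
  have hqq : ¬ G.Adj q q := G.loopless.irrefl q
  have haa : ¬ G.Adj a a := G.loopless.irrefl a
  have hpp : ¬ G.Adj p p := G.loopless.irrefl p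
  have hbb : ¬ G.Adj b b := G.loopless.irrefl b
  have hxx : ¬ G.Adj x x := G.loopless.irrefl x
  -- distinctness
  have ne1 : i - 1 ≠ i := by
    intro h
    have := congrArg Fin.val h
    simp [Fin.sub_def, Fin.add_def] at this
    all_goals omega
  have ne2 : i - 1 ≠ i + 1 := by
    intro h
    have := congrArg Fin.val h
    simp [Fin.sub_def, Fin.add_def] at this
    all_goals omega
  have ne3 : i - 1 ≠ i + 2 := by
    intro h
    have := congrArg Fin.val h
    simp [Fin.sub_def, Fin.add_def] at this
    all_goals omega
  have ne4 : i ≠ i + 1 := by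
    intro h
    have := congrArg Fin.val h
    simp [Fin.sub_def, Fin.add_def] at this
    all_goals omega
  have ne5 : i ≠ i + 2 := by
    intro h
    have := congrArg Fin.val h
    simp [Fin.sub_def, Fin.add_def] at this
    all_goals omega
  have ne6 : (i + 1 : Fin 5) ≠ i + 2 := by
    intro h
    have := congrArg Fin.val h
    simp [Fin.sub_def, Fin.add_def] at this
    all_goals omega
  have dqa : q ≠ a := (hAdisj _ _ ne1).ne_of_mem hq ha
  have dqp : q ≠ p := (hAdisj _ _ ne2).ne_of_mem hq hp
  have dqb : q ≠ b := (hAdisj _ _ ne3).ne_of_mem hq hb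
  have dap : a ≠ p := (hAdisj _ _ ne4).ne_of_mem ha hp
  have dab : a ≠ b := (hAdisj _ _ ne5).ne_of_mem ha hb
  have dpb : p ≠ b := (hAdisj _ _ ne6).ne_of_mem hp hb
  have dxq : x ≠ q := fun h => hxA (Set.mem_iUnion.mpr ⟨i - 1, h ▸ hq⟩)
  have dxa : x ≠ a := fun h => hxA (Set.mem_iUnion.mpr ⟨i, h ▸ ha⟩)
  have dxp : x ≠ p := fun h => hxA (Set.mem_iUnion.mpr ⟨i + 1, h ▸ hp⟩)
  have dxb : x ≠ b := fun h => hxA (Set.mem_iUnion.mpr ⟨i + 2, h ▸ hb⟩)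
  -- build an induced P5: q - a - p - b - x
  let f : Fin 5 → V := ![q, a, p, b, x]
  have hinj : Function.Injective f := by
    intro u v huv
    by_contra hne
    fin_cases u <;> fin_cases v <;>
      simp [f, dqa, dqp, dqb, dap, dab, dpb, dxq, dxa, dxp, dxb,
        dqa.symm, dqp.symm, dqb.symm, dap.symm, dab.symm, dpb.symm,
        dxq.symm, dxa.symm, dxp.symm, dxb.symm] at huv hne ⊢ <;> decide
  refine hP5.false ⟨⟨f, hinj⟩, ?_⟩
  intro u v
  fin_cases u <;> fin_cases v <;>
    simp [f, SimpleGraph.pathGraph_adj, hqa, hap, hpb, hbx, haq, hpa, hbp, hxb',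
      hqp, hbq, hqx, hab, hax, hpx, hpq, hqb, hxq, hba, hxa2, hxp,
      hqq, haa, hpp, hbb, hxx] <;> decide
end

section
/- In the C_5-setup, for each i, every vertex of X_i is complete to A_{i+2} or complete to A_{i−2}. -/
open SimpleGraph

def p5_embed {V : Type*} (G : SimpleGraph V) (x a a1 b b' : V)
  (e1 : G.Adj x a) (e2 : G.Adj a a1) (e3 : G.Adj a1 b) (e4 : G.Adj b b')
  (n1 : ¬ G.Adj x a1) (n2 : ¬ G.Adj x b) (n3 : ¬ G.Adj x b')
  (n4 : ¬ G.Adj a b) (n5 : ¬ G.Adj a b') (n6 : ¬ G.Adj a1 b')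
  (ne1 : x ≠ a) (ne2 : x ≠ a1) (ne3 : x ≠ b) (ne4 : x ≠ b')
  (ne5 : a ≠ a1) (ne6 : a ≠ b) (ne7 : a ≠ b') (ne8 : a1 ≠ b)
  (ne9 : a1 ≠ b') (ne10 : b ≠ b') : pathGraph 5 ↪g G := by
  refine ⟨⟨![x, a, a1, b, b'], ?_⟩, ?_⟩
  · intro u v h
    fin_cases u <;> fin_cases v <;>
      simp only [Matrix.cons_val_zero, Matrix.cons_val_one, Matrix.head_cons,
        Matrix.cons_val_two, Matrix.tail_cons, Matrix.cons_val_three,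
        Matrix.cons_val_four] at h <;>
      first
        | rfl
        | exact absurd h ne1 | exact absurd h.symm ne1
        | exact absurd h ne2 | exact absurd h.symm ne2
        | exact absurd h ne3 | exact absurd h.symm ne3
        | exact absurd h ne4 | exact absurd h.symm ne4
        | exact absurd h ne5 | exact absurd h.symm ne5
        | exact absurd h ne6 | exact absurd h.symm ne6
        | exact absurd h ne7 | exact absurd h.symm ne7
        | exact absurd h ne8 | exact absurd h.symm ne8
        | exact absurd h ne9 | exact absurd h.symm ne9
        | exact absurd h ne10 | exact absurd h.symm ne10
  · intro u v
    fin_cases u <;> fin_cases v <;>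
      simp only [Matrix.cons_val_zero, Matrix.cons_val_one, Matrix.head_cons,
        Matrix.cons_val_two, Matrix.tail_cons, Matrix.cons_val_three,
        Matrix.cons_val_four, pathGraph_adj] <;>
      norm_num <;>
      first
        | exact G.irrefl
        | exact e1 | exact e1.symm | exact e2 | exact e2.symm
        | exact e3 | exact e3.symm | exact e4 | exact e4.symm
        | exact n1 | exact fun h => n1 h.symm
        | exact n2 | exact fun h => n2 h.symm
        | exact n3 | exact fun h => n3 h.symm
        | exact n4 | exact fun h => n4 h.symm
        | exact n5 | exact fun h => n5 h.symm
        | exact n6 | exact fun h => n6 h.symm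

theorem stmt_13 {V : Type*} [Fintype V] (G : SimpleGraph V) (A : Fin 5 → Set V)
    (hconn : G.Connected)
    (hP5 : InducedFree (SimpleGraph.pathGraph 5) G)
    (hW4 : InducedFree (wheel 4) G)
    (hatom : IsGraphAtom G)
    (hAne : ∀ i : Fin 5, (A i).Nonempty)
    (hAdisj : ∀ i j : Fin 5, i ≠ j → Disjoint (A i) (A j))
    (hAcomp : ∀ i : Fin 5, ∀ a ∈ A i, ∀ b ∈ A (i + 1), G.Adj a b)
    (hAanti : ∀ i : Fin 5, ∀ a ∈ A i, ∀ b ∈ A (i + 2), ¬ G.Adj a b)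
    (hAmax : ∀ v : V, v ∉ setA A → ¬ ∃ i : Fin 5,
      (∀ a ∈ A (i - 1) ∪ A (i + 1), G.Adj v a) ∧
      (∀ a ∈ A (i - 2) ∪ A (i + 2), ¬ G.Adj v a)) :
    ∀ i : Fin 5, ∀ x ∈ setX G A i,
      (∀ a ∈ A (i + 2), G.Adj x a) ∨ (∀ a ∈ A (i - 2), G.Adj x a) := by
  intro i x hx
  by_contra hcon
  push_neg at hcon
  obtain ⟨⟨b, hb, hxb⟩, ⟨b', hb', hxb'⟩⟩ := hcon
  obtain ⟨hxA, ⟨a, ha, hxa⟩, -, -, hanti⟩ := hx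
  obtain ⟨a1, ha1⟩ := hAne (i + 1)
  have key : ∀ j : Fin 5, (j + 1) + 1 = j + 2 ∧ (j + 2) + 1 = j - 2 ∧
      (j - 2) + 2 = j ∧ (j + 1) + 2 = j - 2 ∧ j ≠ j + 1 ∧ j ≠ j + 2 ∧
      j ≠ j - 2 ∧ j + 1 ≠ j + 2 ∧ j + 1 ≠ j - 2 ∧ j + 2 ≠ j - 2 := by decide
  obtain ⟨k1, k2, k3, k4, d1, d2, d3, d4, d5, d6⟩ := key i
  have e1 : G.Adj x a := hxa
  have e2 : G.Adj a a1 := hAcomp i a ha a1 ha1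
  have e3 : G.Adj a1 b := hAcomp (i + 1) a1 ha1 b (by rw [k1]; exact hb)
  have e4 : G.Adj b b' := hAcomp (i + 2) b hb b' (by rw [k2]; exact hb')
  have n1 : ¬ G.Adj x a1 := hanti a1 (Or.inl ha1)
  have n4 : ¬ G.Adj a b := hAanti i a ha b hb
  have n5 : ¬ G.Adj a b' := fun h => hAanti (i - 2) b' hb' a (by rw [k3]; exact ha) h.symm
  have n6 : ¬ G.Adj a1 b' := hAanti (i + 1) a1 ha1 b' (by rw [k4]; exact hb')
  have hxne : ∀ c : V, c ∈ setA A → x ≠ c := fun c hc h => hxA (h ▸ hc)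
  have mem : ∀ {j : Fin 5} {c : V}, c ∈ A j → c ∈ setA A :=
    fun {j} {c} hc => Set.mem_iUnion.2 ⟨j, hc⟩
  have ne1 : x ≠ a := hxne a (mem ha)
  have ne2 : x ≠ a1 := hxne a1 (mem ha1)
  have ne3 : x ≠ b := hxne b (mem hb)
  have ne4 : x ≠ b' := hxne b' (mem hb')
  have ne5 : a ≠ a1 := fun h => (hAdisj i (i + 1) d1).ne_of_mem ha ha1 h
  have ne6 : a ≠ b := fun h => (hAdisj i (i + 2) d2).ne_of_mem ha hb h
  have ne7 : a ≠ b' := fun h => (hAdisj i (i - 2) d3).ne_of_mem ha hb' h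
  have ne8 : a1 ≠ b := fun h => (hAdisj (i + 1) (i + 2) d4).ne_of_mem ha1 hb h
  have ne9 : a1 ≠ b' := fun h => (hAdisj (i + 1) (i - 2) d5).ne_of_mem ha1 hb' h
  have ne10 : b ≠ b' := fun h => (hAdisj (i + 2) (i - 2) d6).ne_of_mem hb hb' h
  exact hP5.false (p5_embed G x a a1 b b' e1 e2 e3 e4 n1 hxb hxb' n4 n5 n6
    ne1 ne2 ne3 ne4 ne5 ne6 ne7 ne8 ne9 ne10)
end

section
/- In the C_5-setup, for each i the subgraph of G induced by X_i is P_3-free. -/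
open SimpleGraph

section helpers
variable {V : Type*} {G : SimpleGraph V}

lemma build_P5 {a b c d e : V}
    (dac : a ≠ c) (dad : a ≠ d) (dae : a ≠ e) (dbd : b ≠ d) (dbe : b ≠ e) (dce : c ≠ e)
    (h1 : G.Adj a b) (h2 : G.Adj b c) (h3 : G.Adj c d) (h4 : G.Adj d e)
    (n1 : ¬ G.Adj a c) (n2 : ¬ G.Adj a d) (n3 : ¬ G.Adj a e)
    (n4 : ¬ G.Adj b d) (n5 : ¬ G.Adj b e) (n6 : ¬ G.Adj c e) :
    Nonempty (SimpleGraph.pathGraph 5 ↪g G) := by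
  have dab := h1.ne
  have dbc := h2.ne
  have dcd := h3.ne
  have dde := h4.ne
  refine ⟨⟨⟨![a,b,c,d,e], ?_⟩, ?_⟩⟩
  · intro i j hij
    fin_cases i <;> fin_cases j <;> simp_all <;> (try rfl) <;> simp_all [eq_comm]
  · intro i j
    have h1' := h1.symm; have h2' := h2.symm; have h3' := h3.symm; have h4' := h4.symm
    have n1' : ¬ G.Adj c a := fun h => n1 h.symm
    have n2' : ¬ G.Adj d a := fun h => n2 h.symm
    have n3' : ¬ G.Adj e a := fun h => n3 h.symm
    have n4' : ¬ G.Adj d b := fun h => n4 h.symm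
    have n5' : ¬ G.Adj e b := fun h => n5 h.symm
    have n6' : ¬ G.Adj e c := fun h => n6 h.symm
    fin_cases i <;> fin_cases j <;>
      simp [pathGraph_adj] <;>
      first
        | assumption | exact G.irrefl
        | exact iff_of_false ‹_› (by decide)
        | exact iff_of_true ‹_› (by decide)

lemma build_W4 {c0 c1 c2 c3 h : V}
    (d02 : c0 ≠ c2) (d13 : c1 ≠ c3)
    (e01 : G.Adj c0 c1) (e12 : G.Adj c1 c2) (e23 : G.Adj c2 c3) (e30 : G.Adj c3 c0)
    (n02 : ¬ G.Adj c0 c2) (n13 : ¬ G.Adj c1 c3)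
    (h0 : G.Adj h c0) (h1 : G.Adj h c1) (h2 : G.Adj h c2) (h3 : G.Adj h c3) :
    Nonempty (wheel 4 ↪g G) := by
  have d01 := e01.ne; have d12 := e12.ne; have d23 := e23.ne
  have d30 := e30.ne; have dh0 := h0.ne'; have dh1 := h1.ne'
  have dh2 := h2.ne'; have dh3 := h3.ne'
  refine ⟨⟨⟨Sum.elim ![c0,c1,c2,c3] (fun _ => h), ?_⟩, ?_⟩⟩
  · rintro (i|i) (j|j) hij
    · fin_cases i <;> fin_cases j <;> simp_all <;> (try rfl) <;> simp_all [eq_comm]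
    · fin_cases i <;> simp_all
    · fin_cases j <;> simp_all
    · rfl
  · have e01' := e01.symm; have e12' := e12.symm; have e23' := e23.symm; have e30' := e30.symm
    have h0' := h0.symm; have h1' := h1.symm; have h2' := h2.symm; have h3' := h3.symm
    have n02' : ¬ G.Adj c2 c0 := fun q => n02 q.symm
    have n13' : ¬ G.Adj c3 c1 := fun q => n13 q.symm
    rintro (i|i) (j|j)
    · fin_cases i <;> fin_cases j <;>
        simp [wheel, fromRel_adj, cycleGraph_adj', d02, d13, d02.symm, d13.symm] <;>
        first
          | assumption | exact G.irrefl
          | exact iff_of_false ‹_› (by decide)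
          | exact iff_of_true ‹_› (by decide)
    · fin_cases i <;> simp [wheel, fromRel_adj] <;> assumption
    · fin_cases j <;> simp [wheel, fromRel_adj] <;> assumption
    · simp [wheel, fromRel_adj]

end helpers
section mainlemmas
variable {V : Type*} {G : SimpleGraph V} {B : Fin 5 → Set V}

example : True := trivial

lemma complete_to_B0
    (hP5 : IsEmpty (SimpleGraph.pathGraph 5 ↪g G))
    (hc : ∀ k l : Fin 5, l = k + 1 → ∀ a ∈ B k, ∀ b ∈ B l, G.Adj a b)
    (ha : ∀ k l : Fin 5, l = k + 2 → ∀ a ∈ B k, ∀ b ∈ B l, ¬ G.Adj a b)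
    (hd : ∀ k l : Fin 5, k ≠ l → Disjoint (B k) (B l))
    (hne : ∀ k, (B k).Nonempty)
    {x : V} (hxA : ∀ k, x ∉ B k)
    (hx2 : ∃ a ∈ B 2, G.Adj x a)
    (hx1anti : ∀ a ∈ B 1, ¬ G.Adj x a)
    (hx4anti : ∀ a ∈ B 4, ¬ G.Adj x a) :
    ∀ b ∈ B 0, G.Adj x b := by
  intro b hb
  by_contra hxb
  obtain ⟨a3, ha3, hxa3⟩ := hx2
  obtain ⟨a2, ha2⟩ := hne 1
  obtain ⟨a5, ha5⟩ := hne 4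
  have hds : ∀ {k l : Fin 5} {u v : V}, k ≠ l → u ∈ B k → v ∈ B l → u ≠ v :=
    fun hkl hu hv heq => Set.disjoint_left.1 (hd _ _ hkl) hu (heq ▸ hv)
  have hxne : ∀ {k : Fin 5} {u : V}, u ∈ B k → x ≠ u :=
    fun {k} {u} hu heq => hxA k (heq ▸ hu)
  obtain ⟨f⟩ := build_P5 (G := G) (a := x) (b := a3) (c := a2) (d := b) (e := a5)
    (hxne ha2) (hxne hb) (hxne ha5)
    (hds (by decide) ha3 hb) (hds (by decide) ha3 ha5) (hds (by decide) ha2 ha5)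
    hxa3
    ((hc 1 2 (by decide) a2 ha2 a3 ha3).symm)
    ((hc 0 1 (by decide) b hb a2 ha2).symm)
    ((hc 4 0 (by decide) a5 ha5 b hb).symm)
    (hx1anti a2 ha2) hxb (hx4anti a5 ha5)
    (fun h => ha 0 2 (by decide) b hb a3 ha3 h.symm)
    (ha 2 4 (by decide) a3 ha3 a5 ha5)
    (fun h => ha 4 1 (by decide) a5 ha5 a2 ha2 h.symm)
  exact hP5.false f

lemma complete_to_B2_or_B3
    (hP5 : IsEmpty (SimpleGraph.pathGraph 5 ↪g G))
    (hc : ∀ k l : Fin 5, l = k + 1 → ∀ a ∈ B k, ∀ b ∈ B l, G.Adj a b)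
    (ha : ∀ k l : Fin 5, l = k + 2 → ∀ a ∈ B k, ∀ b ∈ B l, ¬ G.Adj a b)
    (hd : ∀ k l : Fin 5, k ≠ l → Disjoint (B k) (B l))
    (hne : ∀ k, (B k).Nonempty)
    {x : V} (hxA : ∀ k, x ∉ B k)
    (hx0 : ∃ a ∈ B 0, G.Adj x a)
    (hx1anti : ∀ a ∈ B 1, ¬ G.Adj x a) :
    (∀ b ∈ B 2, G.Adj x b) ∨ (∀ b ∈ B 3, G.Adj x b) := by
  by_contra hcon
  push_neg at hcon
  obtain ⟨⟨b3, hb3, hxb3⟩, b4, hb4, hxb4⟩ := hcon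
  obtain ⟨a1, ha1, hxa1⟩ := hx0
  obtain ⟨a2, ha2⟩ := hne 1
  have hds : ∀ {k l : Fin 5} {u v : V}, k ≠ l → u ∈ B k → v ∈ B l → u ≠ v :=
    fun hkl hu hv heq => Set.disjoint_left.1 (hd _ _ hkl) hu (heq ▸ hv)
  have hxne : ∀ {k : Fin 5} {u : V}, u ∈ B k → x ≠ u :=
    fun {k} {u} hu heq => hxA k (heq ▸ hu)
  obtain ⟨f⟩ := build_P5 (G := G) (a := x) (b := a1) (c := a2) (d := b3) (e := b4)
    (hxne ha2) (hxne hb3) (hxne hb4)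
    (hds (by decide) ha1 hb3) (hds (by decide) ha1 hb4) (hds (by decide) ha2 hb4)
    hxa1
    (hc 0 1 (by decide) a1 ha1 a2 ha2)
    (hc 1 2 (by decide) a2 ha2 b3 hb3)
    (hc 2 3 (by decide) b3 hb3 b4 hb4)
    (hx1anti a2 ha2) hxb3 hxb4
    (ha 0 2 (by decide) a1 ha1 b3 hb3)
    (fun h => ha 3 0 (by decide) b4 hb4 a1 ha1 h.symm)
    (ha 1 3 (by decide) a2 ha2 b4 hb4)
  exact hP5.false f

end mainlemmas
theorem stmt_aux {V : Type*} [Fintype V] (G : SimpleGraph V) (A : Fin 5 → Set V)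
    (hP5 : IsEmpty (SimpleGraph.pathGraph 5 ↪g G))
    (hW4 : IsEmpty (wheel 4 ↪g G))
    (hAne : ∀ i : Fin 5, (A i).Nonempty)
    (hAdisj : ∀ i j : Fin 5, i ≠ j → Disjoint (A i) (A j))
    (hAcomp : ∀ i : Fin 5, ∀ a ∈ A i, ∀ b ∈ A (i + 1), G.Adj a b)
    (hAanti : ∀ i : Fin 5, ∀ a ∈ A i, ∀ b ∈ A (i + 2), ¬ G.Adj a b) :
    ∀ i : Fin 5, IsEmpty (SimpleGraph.pathGraph 3 ↪g
      (G.induce {x | x ∉ (⋃ j, A j) ∧ (∃ a ∈ A i, G.Adj x a) ∧ (∃ a ∈ A (i + 2), G.Adj x a) ∧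
        (∃ a ∈ A (i - 2), G.Adj x a) ∧ ∀ a ∈ A (i + 1) ∪ A (i - 1), ¬ G.Adj x a})) := by
  intro i
  set B : Fin 5 → Set V := fun k => A (i + k) with hB
  have hc : ∀ k l : Fin 5, l = k + 1 → ∀ a ∈ B k, ∀ b ∈ B l, G.Adj a b := by
    rintro k l rfl a ha b hb
    exact hAcomp (i + k) a ha b (by rwa [add_assoc] )
  have ha : ∀ k l : Fin 5, l = k + 2 → ∀ a ∈ B k, ∀ b ∈ B l, ¬ G.Adj a b := by
    rintro k l rfl a ha b hb
    exact hAanti (i + k) a ha b (by rwa [add_assoc])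
  have hd : ∀ k l : Fin 5, k ≠ l → Disjoint (B k) (B l) :=
    fun k l hkl => hAdisj _ _ (fun h => hkl (by exact add_left_cancel h))
  have hne : ∀ k, (B k).Nonempty := fun k => hAne _
  have hi0 : i + 0 = i := add_zero i
  have hi3 : i - 2 = i + 3 := (by decide : ∀ j : Fin 5, j - 2 = j + 3) i
  have hi4 : i - 1 = i + 4 := (by decide : ∀ j : Fin 5, j - 1 = j + 4) i
  -- unpack membership
  have unpack : ∀ w, w ∈ {x | x ∉ (⋃ j, A j) ∧ (∃ a ∈ A i, G.Adj x a) ∧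
        (∃ a ∈ A (i + 2), G.Adj x a) ∧ (∃ a ∈ A (i - 2), G.Adj x a) ∧
        ∀ a ∈ A (i + 1) ∪ A (i - 1), ¬ G.Adj x a} →
      (∀ k, w ∉ B k) ∧ (∃ a ∈ B 0, G.Adj w a) ∧ (∃ a ∈ B 2, G.Adj w a) ∧
        (∃ a ∈ B 3, G.Adj w a) ∧ (∀ a ∈ B 1, ¬ G.Adj w a) ∧ (∀ a ∈ B 4, ¬ G.Adj w a) := by
    intro w hw
    obtain ⟨hw1, hw2, hw3, hw4, hw5⟩ := hw
    refine ⟨fun k hk => hw1 (Set.mem_iUnion.2 ⟨i + k, hk⟩), ?_, hw3, ?_, ?_, ?_⟩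
    · simpa [hB, hi0] using hw2
    · rwa [hi3] at hw4
    · exact fun a haa => hw5 a (Or.inl haa)
    · exact fun a haa => hw5 a (Or.inr (hi4 ▸ haa))
  constructor
  intro φ
  set x : V := (φ 0 : V) with hx
  set y : V := (φ 1 : V) with hy
  set z : V := (φ 2 : V) with hz
  obtain ⟨hxA, hx0, hx2, hx3, hx1a, hx4a⟩ := unpack _ (φ 0).2
  obtain ⟨hyA, hy0, hy2, hy3, hy1a, hy4a⟩ := unpack _ (φ 1).2
  obtain ⟨hzA, hz0, hz2, hz3, hz1a, hz4a⟩ := unpack _ (φ 2).2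
  have exy : G.Adj x y := φ.map_rel_iff.2 (by simp [SimpleGraph.pathGraph_adj])
  have eyz : G.Adj y z := φ.map_rel_iff.2 (by simp [SimpleGraph.pathGraph_adj])
  have nxz : ¬ G.Adj x z := fun h =>
    (by simp [SimpleGraph.pathGraph_adj] : ¬ (SimpleGraph.pathGraph 3).Adj 0 2)
      (φ.map_rel_iff.1 h)
  have dxz : x ≠ z := fun h => by
    have := φ.injective (Subtype.ext h)
    simp at this
  -- all three complete to B 0
  have Lx := complete_to_B0 hP5 hc ha hd hne hxA hx2 hx1a hx4a
  have Ly := complete_to_B0 hP5 hc ha hd hne hyA hy2 hy1a hy4a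
  have Lz := complete_to_B0 hP5 hc ha hd hne hzA hz2 hz1a hz4a
  obtain ⟨a1, ha1⟩ := hne 0
  have hds : ∀ {k l : Fin 5} {u v : V}, k ≠ l → u ∈ B k → v ∈ B l → u ≠ v :=
    fun hkl hu hv heq => Set.disjoint_left.1 (hd _ _ hkl) hu (heq ▸ hv)
  -- find a common neighbor a of x,y,z in B 2 ∪ B 3
  have key : ∃ a : V, G.Adj x a ∧ G.Adj y a ∧ G.Adj z a ∧ ¬ G.Adj a a1 ∧ a ≠ a1 ∧
      a ≠ x ∧ a ≠ z := by
    have mk2 : ∀ a ∈ B 2, G.Adj x a → G.Adj y a → G.Adj z a →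
        ∃ a : V, G.Adj x a ∧ G.Adj y a ∧ G.Adj z a ∧ ¬ G.Adj a a1 ∧ a ≠ a1 ∧
          a ≠ x ∧ a ≠ z := fun a haB h1 h2 h3 =>
      ⟨a, h1, h2, h3, fun h => ha 0 2 (by decide) a1 ha1 a haB h.symm,
        hds (by decide) haB ha1,
        fun h => hxA 2 (by subst h; exact haB), fun h => hzA 2 (by subst h; exact haB)⟩
    have mk3 : ∀ a ∈ B 3, G.Adj x a → G.Adj y a → G.Adj z a →
        ∃ a : V, G.Adj x a ∧ G.Adj y a ∧ G.Adj z a ∧ ¬ G.Adj a a1 ∧ a ≠ a1 ∧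
          a ≠ x ∧ a ≠ z := fun a haB h1 h2 h3 =>
      ⟨a, h1, h2, h3, ha 3 0 (by decide) a haB a1 ha1,
        hds (by decide) haB ha1,
        fun h => hxA 3 (by subst h; exact haB), fun h => hzA 3 (by subst h; exact haB)⟩
    rcases complete_to_B2_or_B3 hP5 hc ha hd hne hxA hx0 hx1a with xc2 | xc3 <;>
    rcases complete_to_B2_or_B3 hP5 hc ha hd hne hzA hz0 hz1a with zc2 | zc3
    · obtain ⟨a, haB, hya⟩ := hy2
      exact mk2 a haB (xc2 a haB) hya (zc2 a haB)
    · rcases complete_to_B2_or_B3 hP5 hc ha hd hne hyA hy0 hy1a with yc2 | yc3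
      · obtain ⟨a, haB, hza⟩ := hz2
        exact mk2 a haB (xc2 a haB) (yc2 a haB) hza
      · obtain ⟨a, haB, hxa⟩ := hx3
        exact mk3 a haB hxa (yc3 a haB) (zc3 a haB)
    · rcases complete_to_B2_or_B3 hP5 hc ha hd hne hyA hy0 hy1a with yc2 | yc3
      · obtain ⟨a, haB, hxa⟩ := hx2
        exact mk2 a haB hxa (yc2 a haB) (zc2 a haB)
      · obtain ⟨a, haB, hza⟩ := hz3
        exact mk3 a haB (xc3 a haB) (yc3 a haB) hza
    · obtain ⟨a, haB, hya⟩ := hy3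
      exact mk3 a haB (xc3 a haB) hya (zc3 a haB)
  obtain ⟨a, hax, hay, haz, hna1, hne1, hnex, hnez⟩ := key
  obtain ⟨f⟩ := build_W4 (G := G) (c0 := x) (c1 := a) (c2 := z) (c3 := a1) (h := y)
    dxz hne1
    hax (haz.symm.symm).symm.symm.symm
    (Lz a1 ha1) ((Lx a1 ha1).symm)
    nxz hna1
    exy.symm hay eyz (Ly a1 ha1)
  exact hW4.false f

theorem stmt_14 {V : Type*} [Fintype V] (G : SimpleGraph V) (A : Fin 5 → Set V)
    (hconn : G.Connected)
    (hP5 : InducedFree (SimpleGraph.pathGraph 5) G)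
    (hW4 : InducedFree (wheel 4) G)
    (hatom : IsGraphAtom G)
    (hAne : ∀ i : Fin 5, (A i).Nonempty)
    (hAdisj : ∀ i j : Fin 5, i ≠ j → Disjoint (A i) (A j))
    (hAcomp : ∀ i : Fin 5, ∀ a ∈ A i, ∀ b ∈ A (i + 1), G.Adj a b)
    (hAanti : ∀ i : Fin 5, ∀ a ∈ A i, ∀ b ∈ A (i + 2), ¬ G.Adj a b)
    (hAmax : ∀ v : V, v ∉ setA A → ¬ ∃ i : Fin 5,
      (∀ a ∈ A (i - 1) ∪ A (i + 1), G.Adj v a) ∧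
      (∀ a ∈ A (i - 2) ∪ A (i + 2), ¬ G.Adj v a)) :
    ∀ i : Fin 5, InducedFree (SimpleGraph.pathGraph 3) (G.induce (setX G A i)) := by
  intro i
  exact stmt_aux G A hP5 hW4 hAne hAdisj hAcomp hAanti i
end

section
/- In the C_5-setup, for each i the set X_i is complete to X_{i+1} ∪ X_{i−1}. -/
open SimpleGraph

open SimpleGraph

lemma p5_of {V : Type*} (G : SimpleGraph V)
    (hP5 : InducedFree (SimpleGraph.pathGraph 5) G)
    (v0 v1 v2 v3 v4 : V)
    (h01 : G.Adj v0 v1) (h12 : G.Adj v1 v2) (h23 : G.Adj v2 v3) (h34 : G.Adj v3 v4)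
    (h02 : ¬ G.Adj v0 v2) (h03 : ¬ G.Adj v0 v3) (h04 : ¬ G.Adj v0 v4)
    (h13 : ¬ G.Adj v1 v3) (h14 : ¬ G.Adj v1 v4) (h24 : ¬ G.Adj v2 v4) : False := by
  have hP5' : IsEmpty (SimpleGraph.pathGraph 5 ↪g G) := hP5
  have n01 : v0 ≠ v1 := h01.ne
  have n12 : v1 ≠ v2 := h12.ne
  have n23 : v2 ≠ v3 := h23.ne
  have n34 : v3 ≠ v4 := h34.ne
  have n02 : v0 ≠ v2 := fun h => h03 (h ▸ h23)
  have n03 : v0 ≠ v3 := fun h => h02 (h ▸ h23.symm)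
  have n04 : v0 ≠ v4 := fun h => h03 (h ▸ h34.symm)
  have n13 : v1 ≠ v3 := fun h => h14 (h ▸ h34)
  have n14 : v1 ≠ v4 := fun h => h13 (h ▸ h34.symm)
  have n24 : v2 ≠ v4 := fun h => h14 (h ▸ h12)
  refine hP5'.false ⟨⟨![v0, v1, v2, v3, v4], ?_⟩, ?_⟩
  · intro a b hab
    fin_cases a <;> fin_cases b <;>
      simp only [Matrix.cons_val_zero, Matrix.cons_val_one, Matrix.head_cons,
        Matrix.cons_val_two, Matrix.tail_cons, Matrix.cons_val_three,
        Matrix.cons_val_four, Matrix.cons_val_fin_one] at hab <;>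
      first
        | rfl
        | exact absurd hab n01 | exact absurd hab.symm n01
        | exact absurd hab n02 | exact absurd hab.symm n02
        | exact absurd hab n03 | exact absurd hab.symm n03
        | exact absurd hab n04 | exact absurd hab.symm n04
        | exact absurd hab n12 | exact absurd hab.symm n12
        | exact absurd hab n13 | exact absurd hab.symm n13
        | exact absurd hab n14 | exact absurd hab.symm n14
        | exact absurd hab n23 | exact absurd hab.symm n23
        | exact absurd hab n24 | exact absurd hab.symm n24
        | exact absurd hab n34 | exact absurd hab.symm n34
  · intro a b
    fin_cases a <;> fin_cases b <;>
      simp only [Function.Embedding.coeFn_mk, Matrix.cons_val_zero,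
        Matrix.cons_val_one, Matrix.head_cons,
        Matrix.cons_val_two, Matrix.tail_cons, Matrix.cons_val_three,
        Matrix.cons_val_four, Matrix.cons_val_fin_one] <;>
      first
        | exact iff_of_true h01 (by rw [SimpleGraph.pathGraph_adj]; decide) | exact iff_of_true h01.symm (by rw [SimpleGraph.pathGraph_adj]; decide)
        | exact iff_of_true h12 (by rw [SimpleGraph.pathGraph_adj]; decide) | exact iff_of_true h12.symm (by rw [SimpleGraph.pathGraph_adj]; decide)
        | exact iff_of_true h23 (by rw [SimpleGraph.pathGraph_adj]; decide) | exact iff_of_true h23.symm (by rw [SimpleGraph.pathGraph_adj]; decide)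
        | exact iff_of_true h34 (by rw [SimpleGraph.pathGraph_adj]; decide) | exact iff_of_true h34.symm (by rw [SimpleGraph.pathGraph_adj]; decide)
        | exact iff_of_false (G.irrefl) (by rw [SimpleGraph.pathGraph_adj]; decide)
        | exact iff_of_false h02 (by rw [SimpleGraph.pathGraph_adj]; decide)
        | exact iff_of_false h03 (by rw [SimpleGraph.pathGraph_adj]; decide)
        | exact iff_of_false h04 (by rw [SimpleGraph.pathGraph_adj]; decide)
        | exact iff_of_false h13 (by rw [SimpleGraph.pathGraph_adj]; decide)
        | exact iff_of_false h14 (by rw [SimpleGraph.pathGraph_adj]; decide)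
        | exact iff_of_false h24 (by rw [SimpleGraph.pathGraph_adj]; decide)
        | exact iff_of_false (fun h => h02 h.symm) (by rw [SimpleGraph.pathGraph_adj]; decide)
        | exact iff_of_false (fun h => h03 h.symm) (by rw [SimpleGraph.pathGraph_adj]; decide)
        | exact iff_of_false (fun h => h04 h.symm) (by rw [SimpleGraph.pathGraph_adj]; decide)
        | exact iff_of_false (fun h => h13 h.symm) (by rw [SimpleGraph.pathGraph_adj]; decide)
        | exact iff_of_false (fun h => h14 h.symm) (by rw [SimpleGraph.pathGraph_adj]; decide)
        | exact iff_of_false (fun h => h24 h.symm) (by rw [SimpleGraph.pathGraph_adj]; decide)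

lemma fin5_arith : ∀ i : Fin 5, i + 1 - 2 = i - 1 ∧ (i - 1) + 1 = i ∧
    (i + 2) + 2 = i - 1 ∧ (i + 1) + 1 = i + 2 ∧ (i + 1) - 1 = i ∧
    (i - 1) + 2 = i + 1 ∧ (i - 1) - 1 = i - 2 ∧ (i + 1) + 2 = i - 2 ∧
    (i - 2) + 2 = i := by decide

theorem stmt_15 {V : Type*} [Fintype V] (G : SimpleGraph V) (A : Fin 5 → Set V)
    (hconn : G.Connected)
    (hP5 : InducedFree (SimpleGraph.pathGraph 5) G)
    (hW4 : InducedFree (wheel 4) G)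
    (hatom : IsGraphAtom G)
    (hAne : ∀ i : Fin 5, (A i).Nonempty)
    (hAdisj : ∀ i j : Fin 5, i ≠ j → Disjoint (A i) (A j))
    (hAcomp : ∀ i : Fin 5, ∀ a ∈ A i, ∀ b ∈ A (i + 1), G.Adj a b)
    (hAanti : ∀ i : Fin 5, ∀ a ∈ A i, ∀ b ∈ A (i + 2), ¬ G.Adj a b)
    (hAmax : ∀ v : V, v ∉ setA A → ¬ ∃ i : Fin 5,
      (∀ a ∈ A (i - 1) ∪ A (i + 1), G.Adj v a) ∧
      (∀ a ∈ A (i - 2) ∪ A (i + 2), ¬ G.Adj v a)) :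
    ∀ i : Fin 5, ∀ x ∈ setX G A i,
      ∀ y ∈ setX G A (i + 1) ∪ setX G A (i - 1), G.Adj x y := by
  intro i x hx y hy
  obtain ⟨hxA, ⟨a1, ha1, hxa1⟩, ⟨f, hf, hxf⟩, ⟨f', hf', hxf'⟩, hxanti⟩ := hx
  obtain ⟨e1, e2, e3, e4, e5, e6, e7, e8, e9⟩ := fin5_arith i
  by_contra hxy
  cases hy with
  | inl hy =>
    obtain ⟨hyA, ⟨b, hb, hyb⟩, ⟨c, hc, hyc⟩, ⟨a5, ha5, hya5⟩, hyanti⟩ := hy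
    rw [e1] at ha5
    exact p5_of G hP5 y a5 a1 x f
      hya5
      (hAcomp (i - 1) a5 ha5 a1 (by rw [e2]; exact ha1))
      hxa1.symm
      hxf
      (hyanti a1 (Or.inr (by rw [e5]; exact ha1)))
      (fun h => hxy h.symm)
      (hyanti f (Or.inl (by rw [e4]; exact hf)))
      (fun h => hxanti a5 (Or.inr ha5) h.symm)
      (fun h => hAanti (i + 2) f hf a5 (by rw [e3]; exact ha5) h.symm)
      (hAanti i a1 ha1 f hf)
  | inr hy =>
    obtain ⟨hyA, ⟨c, hc, hyc⟩, ⟨b, hb, hyb⟩, ⟨d, hd, hyd⟩, hyanti⟩ := hy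
    rw [e6] at hb
    exact p5_of G hP5 y b a1 x f'
      hyb
      (hAcomp i a1 ha1 b hb).symm
      hxa1.symm
      hxf'
      (hyanti a1 (Or.inl (by rw [e2]; exact ha1)))
      (fun h => hxy h.symm)
      (hyanti f' (Or.inr (by rw [e7]; exact hf')))
      (fun h => hxanti b (Or.inl hb) h.symm)
      (hAanti (i + 1) b hb f' (by rw [e8]; exact hf'))
      (fun h => hAanti (i - 2) f' hf' a1 (by rw [e9]; exact ha1) h.symm)
end

section
/- In the C_5-setup, for each i, every vertex of Y_i is complete to A_{i−1} or complete to A_{i+1}. -/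
open SimpleGraph

lemma buildP5 {V : Type*} (G : SimpleGraph V) (v : Fin 5 → V)
    (h01 : G.Adj (v 0) (v 1)) (h12 : G.Adj (v 1) (v 2)) (h23 : G.Adj (v 2) (v 3))
    (h34 : G.Adj (v 3) (v 4))
    (h02 : ¬ G.Adj (v 0) (v 2)) (h03 : ¬ G.Adj (v 0) (v 3)) (h04 : ¬ G.Adj (v 0) (v 4))
    (h13 : ¬ G.Adj (v 1) (v 3)) (h14 : ¬ G.Adj (v 1) (v 4)) (h24 : ¬ G.Adj (v 2) (v 4)) :
    Nonempty (SimpleGraph.pathGraph 5 ↪g G) := by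
  have hinj : Function.Injective v := by
    intro i j h
    fin_cases i <;> fin_cases j <;> first | rfl | simp_all [G.adj_comm]
  refine ⟨⟨⟨v, hinj⟩, ?_⟩⟩
  intro a b
  fin_cases a <;> fin_cases b <;>
    simp only [pathGraph_adj] <;> norm_num <;>
    first
      | exact h01 | exact h12 | exact h23 | exact h34
      | exact h01.symm | exact h12.symm | exact h23.symm | exact h34.symm
      | exact h02 | exact h03 | exact h04 | exact h13 | exact h14 | exact h24
      | exact fun h => h02 h.symm | exact fun h => h03 h.symm | exact fun h => h04 h.symm
      | exact fun h => h13 h.symm | exact fun h => h14 h.symm | exact fun h => h24 h.symm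

lemma fin5arith : ∀ i : Fin 5, i - 1 + 1 = i ∧ i + 1 + 1 = i + 2 ∧ i - 1 + 2 = i + 1 ∧
    i + 2 + 2 = i - 1 ∧ i - 1 ≠ i ∧ i + 1 ≠ i ∧ i + 2 ≠ i := by decide

theorem stmt_16 {V : Type*} [Fintype V] (G : SimpleGraph V) (A : Fin 5 → Set V)
    (hconn : G.Connected)
    (hP5 : InducedFree (SimpleGraph.pathGraph 5) G)
    (hW4 : InducedFree (wheel 4) G)
    (hatom : IsGraphAtom G)
    (hAne : ∀ i : Fin 5, (A i).Nonempty)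
    (hAdisj : ∀ i j : Fin 5, i ≠ j → Disjoint (A i) (A j))
    (hAcomp : ∀ i : Fin 5, ∀ a ∈ A i, ∀ b ∈ A (i + 1), G.Adj a b)
    (hAanti : ∀ i : Fin 5, ∀ a ∈ A i, ∀ b ∈ A (i + 2), ¬ G.Adj a b)
    (hAmax : ∀ v : V, v ∉ setA A → ¬ ∃ i : Fin 5,
      (∀ a ∈ A (i - 1) ∪ A (i + 1), G.Adj v a) ∧
      (∀ a ∈ A (i - 2) ∪ A (i + 2), ¬ G.Adj v a)) :
    ∀ i : Fin 5, ∀ y ∈ setY G A i,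
      (∀ a ∈ A (i - 1), G.Adj y a) ∨ (∀ a ∈ A (i + 1), G.Adj y a) := by
  intro i y hy
  by_contra hcon
  push_neg at hcon
  obtain ⟨⟨b, hb, hyb⟩, ⟨c, hc, hyc⟩⟩ := hcon
  obtain ⟨e1, e2, e3, e4, n1, n2, n3⟩ := fin5arith i
  obtain ⟨a, ha⟩ := hAne i
  obtain ⟨d, hd, hyd⟩ := hy.2.1 (i+2) n3
  apply hP5.false (Classical.choice ?_)
  apply buildP5 G ![b, a, c, d, y]
  · exact hAcomp (i-1) b hb a (by rw [e1]; exact ha)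
  · exact hAcomp i a ha c hc
  · exact hAcomp (i+1) c hc d (by rw [e2]; exact hd)
  · exact hyd.symm
  · exact hAanti (i-1) b hb c (by rw [e3]; exact hc)
  · exact fun h => hAanti (i+2) d hd b (by rw [e4]; exact hb) h.symm
  · exact fun h => hyb h.symm
  · exact hAanti i a ha d hd
  · exact fun h => hy.2.2 a ha h.symm
  · exact fun h => hyc h.symm
end

section
/- In the C_5-setup, if Z = ∅ then the subgraph of G induced by T is P_3-free. -/
open SimpleGraph

section Helpers

lemma no_P5 {V : Type*} {G : SimpleGraph V} (hP5 : InducedFree (SimpleGraph.pathGraph 5) G)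
    (v0 v1 v2 v3 v4 : V)
    (h01 : G.Adj v0 v1) (h12 : G.Adj v1 v2) (h23 : G.Adj v2 v3) (h34 : G.Adj v3 v4)
    (h02 : ¬G.Adj v0 v2) (h03 : ¬G.Adj v0 v3) (h04 : ¬G.Adj v0 v4)
    (h13 : ¬G.Adj v1 v3) (h14 : ¬G.Adj v1 v4) (h24 : ¬G.Adj v2 v4)
    (d02 : v0 ≠ v2) (d03 : v0 ≠ v3) (d04 : v0 ≠ v4) (d13 : v1 ≠ v3)
    (d14 : v1 ≠ v4) (d24 : v2 ≠ v4) : False := by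
  have d01 := h01.ne; have d12 := h12.ne; have d23 := h23.ne; have d34 := h34.ne
  apply hP5.false
  refine ⟨⟨![v0,v1,v2,v3,v4], ?_⟩, ?_⟩
  · intro a b hab
    fin_cases a <;> fin_cases b <;> simp_all
  · intro a b
    have h10 := h01.symm; have h21 := h12.symm; have h32 := h23.symm; have h43 := h34.symm
    have h20 : ¬G.Adj v2 v0 := fun h => h02 h.symm
    have h30 : ¬G.Adj v3 v0 := fun h => h03 h.symm
    have h40 : ¬G.Adj v4 v0 := fun h => h04 h.symm
    have h31 : ¬G.Adj v3 v1 := fun h => h13 h.symm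
    have h41 : ¬G.Adj v4 v1 := fun h => h14 h.symm
    have h42 : ¬G.Adj v4 v2 := fun h => h24 h.symm
    fin_cases a <;> fin_cases b <;>
      simp_all [SimpleGraph.pathGraph_adj, SimpleGraph.irrefl] <;> assumption

lemma no_W4 {V : Type*} {G : SimpleGraph V} (hW4 : InducedFree (wheel 4) G)
    (c0 c1 c2 c3 h : V)
    (h01 : G.Adj c0 c1) (h12 : G.Adj c1 c2) (h23 : G.Adj c2 c3) (h30 : G.Adj c3 c0)
    (h02 : ¬G.Adj c0 c2) (h13 : ¬G.Adj c1 c3)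
    (hh0 : G.Adj h c0) (hh1 : G.Adj h c1) (hh2 : G.Adj h c2) (hh3 : G.Adj h c3)
    (d02 : c0 ≠ c2) (d13 : c1 ≠ c3) : False := by
  have d01 := h01.ne; have d12 := h12.ne; have d23 := h23.ne
  have d30 := h30.ne
  have dh0 := hh0.ne; have dh1 := hh1.ne; have dh2 := hh2.ne; have dh3 := hh3.ne
  have h10 := h01.symm; have h21 := h12.symm; have h32 := h23.symm; have h03 := h30.symm
  have h0h := hh0.symm; have h1h := hh1.symm; have h2h := hh2.symm; have h3h := hh3.symm
  have h20 : ¬G.Adj c2 c0 := fun hh => h02 hh.symm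
  have h31 : ¬G.Adj c3 c1 := fun hh => h13 hh.symm
  apply hW4.false
  refine ⟨⟨Sum.elim ![c0,c1,c2,c3] (fun _ => h), ?_⟩, ?_⟩
  · intro a b hab
    rcases a with a | a <;> rcases b with b | b <;>
      first
      | (fin_cases a <;> fin_cases b <;> simp_all)
      | (fin_cases a <;> simp_all)
      | (fin_cases b <;> simp_all)
      | simp_all
  · intro a b
    rcases a with a | a <;> rcases b with b | b <;>
      [skip; (obtain ⟨⟩ := b); (obtain ⟨⟩ := a); (obtain ⟨⟩ := a; obtain ⟨⟩ := b)] <;>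
      first
      | (fin_cases a <;> fin_cases b <;> simp only [Sum.elim_inl, Sum.elim_inr,
          Matrix.cons_val_zero, Matrix.cons_val_one, Matrix.head_cons, Matrix.cons_val_two,
          Matrix.tail_cons, Matrix.cons_val_three] <;>
          first
          | exact iff_of_true (by assumption) (by rw [wheel, SimpleGraph.fromRel_adj]; decide)
          | exact iff_of_false (by assumption) (by rw [wheel, SimpleGraph.fromRel_adj]; decide)
          | exact iff_of_false (G.irrefl) (by rw [wheel, SimpleGraph.fromRel_adj]; decide))
      | (fin_cases a <;> simp only [Sum.elim_inl, Sum.elim_inr,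
          Matrix.cons_val_zero, Matrix.cons_val_one, Matrix.head_cons, Matrix.cons_val_two,
          Matrix.tail_cons, Matrix.cons_val_three] <;>
          first
          | exact iff_of_true (by assumption) (by rw [wheel, SimpleGraph.fromRel_adj]; decide)
          | exact iff_of_false (by assumption) (by rw [wheel, SimpleGraph.fromRel_adj]; decide))
      | (fin_cases b <;> simp only [Sum.elim_inl, Sum.elim_inr,
          Matrix.cons_val_zero, Matrix.cons_val_one, Matrix.head_cons, Matrix.cons_val_two,
          Matrix.tail_cons, Matrix.cons_val_three] <;>
          first
          | exact iff_of_true (by assumption) (by rw [wheel, SimpleGraph.fromRel_adj]; decide)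
          | exact iff_of_false (by assumption) (by rw [wheel, SimpleGraph.fromRel_adj]; decide))
      | exact iff_of_false (G.irrefl) (by rw [wheel, SimpleGraph.fromRel_adj]; decide)

end Helpers

theorem stmt_17 {V : Type*} [Fintype V] (G : SimpleGraph V) (A : Fin 5 → Set V)
    (hconn : G.Connected)
    (hP5 : InducedFree (SimpleGraph.pathGraph 5) G)
    (hW4 : InducedFree (wheel 4) G)
    (hatom : IsGraphAtom G)
    (hAne : ∀ i : Fin 5, (A i).Nonempty)
    (hAdisj : ∀ i j : Fin 5, i ≠ j → Disjoint (A i) (A j))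
    (hAcomp : ∀ i : Fin 5, ∀ a ∈ A i, ∀ b ∈ A (i + 1), G.Adj a b)
    (hAanti : ∀ i : Fin 5, ∀ a ∈ A i, ∀ b ∈ A (i + 2), ¬ G.Adj a b)
    (hAmax : ∀ v : V, v ∉ setA A → ¬ ∃ i : Fin 5,
      (∀ a ∈ A (i - 1) ∪ A (i + 1), G.Adj v a) ∧
      (∀ a ∈ A (i - 2) ∪ A (i + 2), ¬ G.Adj v a))
    (hZ : setZ G A = ∅) :
    InducedFree (SimpleGraph.pathGraph 3) (G.induce (setT G A)) := by
  constructor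
  intro f
  -- the three vertices of the induced P3 in T
  set T : Set V := setT G A with hTdef
  have adj01 : (SimpleGraph.pathGraph 3).Adj 0 1 := by
    rw [SimpleGraph.pathGraph_adj]; decide
  have adj12 : (SimpleGraph.pathGraph 3).Adj 1 2 := by
    rw [SimpleGraph.pathGraph_adj]; decide
  have nadj02 : ¬ (SimpleGraph.pathGraph 3).Adj 0 2 := by
    rw [SimpleGraph.pathGraph_adj]; decide
  set t1 : V := (f 0 : V) with ht1def
  set t2 : V := (f 1 : V) with ht2def
  set t3 : V := (f 2 : V) with ht3def
  have ht1 : t1 ∈ T := (f 0).2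
  have ht2 : t2 ∈ T := (f 1).2
  have ht3 : t3 ∈ T := (f 2).2
  have a12 : G.Adj t1 t2 := f.map_rel_iff.mpr adj01
  have a23 : G.Adj t2 t3 := f.map_rel_iff.mpr adj12
  have n13 : ¬ G.Adj t1 t3 := fun h => nadj02 (f.map_rel_iff.mp h)
  have d13 : t1 ≠ t3 := by
    intro h
    have : f 0 = f 2 := Subtype.ext h
    have := f.injective this
    exact absurd this (by decide)
  -- membership facts about T
  have hTnA : ∀ t ∈ T, t ∉ setA A := fun t ht => ht.1
  have hTadj : ∀ t ∈ T, ∀ a ∈ setA A, ¬ G.Adj t a := fun t ht => ht.2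
  have nbr_notA : ∀ x t : V, t ∈ T → G.Adj x t → x ∉ setA A := by
    intro x t ht hadj hxA
    exact ht.2 x hxA hadj.symm
  -- every vertex outside A ∪ T has a neighbor p in A together with a
  -- non-neighbor b in A adjacent to p
  have exists_pb : ∀ x : V, x ∉ setA A → x ∉ T →
      ∃ p b : V, p ∈ setA A ∧ b ∈ setA A ∧ G.Adj x p ∧ G.Adj p b ∧ ¬ G.Adj x b := by
    intro x hxA hxT
    have hn : ∃ a ∈ setA A, G.Adj x a := by
      by_contra h
      push_neg at h
      exact hxT ⟨hxA, h⟩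
    obtain ⟨a, ha, hxa⟩ := hn
    obtain ⟨j, haj⟩ : ∃ j, a ∈ A j := Set.mem_iUnion.mp ha
    have hi : ∃ i : Fin 5, ∀ c ∈ A i, ¬ G.Adj x c := by
      by_contra h
      push_neg at h
      have hmem : x ∈ setZ G A := ⟨hxA, h⟩
      rw [hZ] at hmem
      exact hmem
    obtain ⟨i, hi⟩ := hi
    have key : ∃ k : Fin 5, (∃ c ∈ A k, G.Adj x c) ∧ ∀ c ∈ A (k+1), ¬ G.Adj x c := by
      by_contra h
      push_neg at h
      have step : ∀ k : Fin 5, (∃ c ∈ A k, G.Adj x c) → (∃ c ∈ A (k+1), G.Adj x c) := h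
      have e0 : ∃ c ∈ A (j+0), G.Adj x c := by rw [add_zero]; exact ⟨a, haj, hxa⟩
      have e1 : ∃ c ∈ A (j+1), G.Adj x c := step j ⟨a, haj, hxa⟩
      have e2 : ∃ c ∈ A (j+2), G.Adj x c := by
        have := step _ e1; rwa [show j+1+1 = j+2 by rw [add_assoc]; rfl] at this
      have e3 : ∃ c ∈ A (j+3), G.Adj x c := by
        have := step _ e2; rwa [show j+2+1 = j+3 by rw [add_assoc]; rfl] at this
      have e4 : ∃ c ∈ A (j+4), G.Adj x c := by
        have := step _ e3; rwa [show j+3+1 = j+4 by rw [add_assoc]; rfl] at this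
      obtain ⟨m, hm⟩ : ∃ m : Fin 5, i = j + m := ⟨i - j, by abel⟩
      fin_cases m
      · rw [hm] at hi; obtain ⟨c, hc, hxc⟩ := e0; exact hi c hc hxc
      · rw [hm] at hi; obtain ⟨c, hc, hxc⟩ := e1; exact hi c hc hxc
      · rw [hm] at hi; obtain ⟨c, hc, hxc⟩ := e2; exact hi c hc hxc
      · rw [hm] at hi; obtain ⟨c, hc, hxc⟩ := e3; exact hi c hc hxc
      · rw [hm] at hi; obtain ⟨c, hc, hxc⟩ := e4; exact hi c hc hxc
    obtain ⟨k, ⟨p, hp, hxp⟩, hk1⟩ := key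
    obtain ⟨b, hb⟩ := hAne (k+1)
    exact ⟨p, b, Set.mem_iUnion.mpr ⟨k, hp⟩, Set.mem_iUnion.mpr ⟨k+1, hb⟩,
      hxp, hAcomp k p hp b hb, hk1 b hb⟩
  -- propagation of adjacency along T
  have L2 : ∀ x t t' : V, x ∉ T → t ∈ T → t' ∈ T → G.Adj x t → G.Adj t t' → G.Adj x t' := by
    intro x t t' hxT ht ht' hxt htt'
    by_contra hxt'
    have hxA : x ∉ setA A := nbr_notA x t ht hxt
    obtain ⟨p, b, hpA, hbA, hxp, hpb, hxb⟩ := exists_pb x hxA hxT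
    exact no_P5 hP5 t' t x p b htt'.symm hxt.symm hxp hpb
      (fun h => hxt' h.symm) (ht'.2 p hpA) (ht'.2 b hbA) (ht.2 p hpA) (ht.2 b hbA) hxb
      (fun h => hxT (h ▸ ht')) (fun h => (h ▸ ht'.1) hpA)
      (fun h => (h ▸ ht'.1) hbA) (fun h => (h ▸ ht.1) hpA) (fun h => (h ▸ ht.1) hbA)
      (fun h => hxA (h ▸ hbA))
  -- reachability inside T from t1
  set rel : V → V → Prop := fun a b => a ∈ T ∧ b ∈ T ∧ G.Adj a b with hreldef
  set R : V → Prop := fun v => Relation.ReflTransGen rel t1 v with hRdef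
  have SsubT : ∀ v, R v → v ∈ T := by
    intro v h
    induction h with
    | refl => exact ht1
    | tail _ hstep _ => exact hstep.2.1
  have L3 : ∀ x v : V, x ∉ T → R v → G.Adj x v → G.Adj x t1 := by
    intro x v hxT h
    induction h with
    | refl => exact id
    | @tail u w hR hstep ih =>
      intro hxw
      exact ih (L2 x w u hxT hstep.2.1 hstep.1 hxw hstep.2.2.symm)
  -- the clique cutset
  set Q : Set V := {x | x ∉ T ∧ G.Adj x t1} with hQdef
  have hQA : ∀ x ∈ Q, x ∉ setA A := fun x hx => nbr_notA x t1 ht1 hx.2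
  have hQclique : G.IsClique Q := by
    intro x hx y hy hne
    by_contra hxy
    have hx2 : G.Adj x t2 := L2 x t1 t2 hx.1 ht1 ht2 hx.2 a12
    have hx3 : G.Adj x t3 := L2 x t2 t3 hx.1 ht2 ht3 hx2 a23
    have hy2 : G.Adj y t2 := L2 y t1 t2 hy.1 ht1 ht2 hy.2 a12
    have hy3 : G.Adj y t3 := L2 y t2 t3 hy.1 ht2 ht3 hy2 a23
    exact no_W4 hW4 x t1 y t3 t2 hx.2 hy.2.symm hy3 hx3.symm hxy n13
      hx2.symm a12.symm hy2.symm a23 hne d13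
  apply hatom
  refine ⟨Q, hQclique, ?_⟩
  have hcard1 : Nat.card G.ConnectedComponent = 1 := by
    rw [Nat.card_eq_one_iff_unique]
    constructor
    · constructor
      intro c d
      refine SimpleGraph.ConnectedComponent.ind₂ ?_ c d
      intro v w
      exact SimpleGraph.ConnectedComponent.eq.mpr (hconn.preconnected v w)
    · exact ⟨G.connectedComponentMk t1⟩
  rw [hcard1]
  have ht1Q : t1 ∈ Qᶜ := fun h => h.1 ht1
  obtain ⟨a0, ha0⟩ := hAne 0
  have ha0A : a0 ∈ setA A := Set.mem_iUnion.mpr ⟨0, ha0⟩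
  have ha0Q : a0 ∈ Qᶜ := fun h => hQA a0 h ha0A
  have inv : ∀ (s v : ↥(Qᶜ)) (_ : (G.induce Qᶜ).Walk s v), R ↑s → R ↑v := by
    intro s v w
    induction w with
    | nil => exact id
    | @cons a b c hadj p ih =>
      intro ha
      apply ih
      have haT : (a : V) ∈ T := SsubT _ ha
      have hadj' : G.Adj ↑a ↑b := hadj
      by_cases hbT : (b : V) ∈ T
      · exact ha.tail ⟨haT, hbT, hadj'⟩
      · exfalso
        have hb1 : G.Adj ↑b t1 := L3 ↑b ↑a hbT ha hadj'.symm
        exact b.2 ⟨hbT, hb1⟩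
  have hnontriv : Nontrivial ((G.induce Qᶜ).ConnectedComponent) := by
    refine ⟨(G.induce Qᶜ).connectedComponentMk ⟨t1, ht1Q⟩,
      (G.induce Qᶜ).connectedComponentMk ⟨a0, ha0Q⟩, ?_⟩
    intro heq
    have hreach := SimpleGraph.ConnectedComponent.eq.mp heq
    obtain ⟨w⟩ := hreach
    have : R a0 := inv _ _ w Relation.ReflTransGen.refl
    exact (SsubT _ this).1 ha0A
  exact Finite.one_lt_card_iff_nontrivial.mpr hnontriv
end
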